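/- arXiv:1812.05013 — 6 statements merged into one kernel-verified Lean document; each statement's English description precedes it below -/
import Mathlib

section
/- Let n, k, t be positive integers, let α ≥ 0, and let F ∈ ℂ^{n×n} be a matrix all of whose entries satisfy |F_{ij}| ≤ α. Then for every k-sparse vector x ∈ ℂ^n and every t-sparse vector e ∈ ℂ^n, ∑_{i=1}^{n} |(Fx)_i|·|e_i| ≤ α·√(k·t)·‖x‖₂·‖e‖₂. -/
/-- The Euclidean (ℓ2) norm of a complex vector. -/
noncomputable def l2norm {n : ℕ} (x : Fin n → ℂ) : ℝ :=
  Real.sqrt (∑ i, ‖x i‖ ^ 2)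

/-- A vector is `k`-sparse if at most `k` of its entries are nonzero. -/
def Sparse {n : ℕ} (k : ℕ) (x : Fin n → ℂ) : Prop :=
  (Finset.univ.filter (fun i => x i ≠ 0)).card ≤ k

lemma sparse_l1_le {n k : ℕ} (x : Fin n → ℂ) (hx : Sparse k x) :
    ∑ i, ‖x i‖ ≤ Real.sqrt k * l2norm x := by
  set S := Finset.univ.filter (fun i => x i ≠ 0) with hS
  have hsum : ∑ i, ‖x i‖ = ∑ i ∈ S, ‖x i‖ := by
    refine (Finset.sum_subset (Finset.subset_univ _) ?_).symm
    intro i _ h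
    have : x i = 0 := by
      by_contra h0
      exact h (by simp [hS, h0])
    simp [this]
  have hsq : (∑ i ∈ S, ‖x i‖) ^ 2 ≤
      (k : ℝ) * ∑ i, ‖x i‖ ^ 2 := by
    calc (∑ i ∈ S, ‖x i‖) ^ 2
        ≤ (S.card : ℝ) * ∑ i ∈ S, ‖x i‖ ^ 2 :=
          sq_sum_le_card_mul_sum_sq
      _ ≤ (k : ℝ) * ∑ i, ‖x i‖ ^ 2 := by
          apply mul_le_mul (by exact_mod_cast hx)
            (Finset.sum_le_sum_of_subset_of_nonneg (Finset.subset_univ _)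
              (fun i _ _ => by positivity))
            (Finset.sum_nonneg fun i _ => by positivity) (by positivity)
  rw [hsum]
  have h1 : (∑ i ∈ S, ‖x i‖) ≤
      Real.sqrt ((k : ℝ) * ∑ i, ‖x i‖ ^ 2) := by
    refine (Real.le_sqrt ?_ ?_).mpr hsq
    · exact Finset.sum_nonneg fun i _ => by positivity
    · positivity
  calc (∑ i ∈ S, ‖x i‖)
      ≤ Real.sqrt ((k : ℝ) * ∑ i, ‖x i‖ ^ 2) := h1
    _ = Real.sqrt k * l2norm x := Real.sqrt_mul (by positivity) _

/-- Bilinear estimate: if every entry of `F` has modulus at most `α`, `x` is `k`-sparse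
and `e` is `t`-sparse, then `∑ i |(Fx)_i|·|e_i| ≤ α·√(kt)·‖x‖₂·‖e‖₂`. -/
theorem bilinear_uncertainty_bound
    (n k t : ℕ) (hn : 0 < n) (hk : 0 < k) (ht : 0 < t) (α : ℝ) (hα : 0 ≤ α)
    (F : Matrix (Fin n) (Fin n) ℂ) (hF : ∀ i j, ‖F i j‖ ≤ α)
    (x : Fin n → ℂ) (hx : Sparse k x)
    (e : Fin n → ℂ) (he : Sparse t e) :
    ∑ i, ‖F.mulVec x i‖ * ‖e i‖ ≤
      α * Real.sqrt (k * t) * l2norm x * l2norm e := by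
  have hxl2 : 0 ≤ l2norm x := Real.sqrt_nonneg _
  have hel2 : 0 ≤ l2norm e := Real.sqrt_nonneg _
  have hFx : ∀ i, ‖F.mulVec x i‖ ≤ α * (Real.sqrt k * l2norm x) := by
    intro i
    calc ‖F.mulVec x i‖ = ‖∑ j, F i j * x j‖ := rfl
      _ ≤ ∑ j, ‖F i j * x j‖ := by
          exact norm_sum_le _ _
      _ = ∑ j, ‖F i j‖ * ‖x j‖ := by simp [map_mul]
      _ ≤ ∑ j, α * ‖x j‖ :=
          Finset.sum_le_sum fun j _ =>
            mul_le_mul_of_nonneg_right (hF i j) (norm_nonneg _)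
      _ = α * ∑ j, ‖x j‖ := by rw [Finset.mul_sum]
      _ ≤ α * (Real.sqrt k * l2norm x) :=
          mul_le_mul_of_nonneg_left (sparse_l1_le x hx) hα
  calc ∑ i, ‖F.mulVec x i‖ * ‖e i‖
      ≤ ∑ i, α * (Real.sqrt k * l2norm x) * ‖e i‖ :=
        Finset.sum_le_sum fun i _ =>
          mul_le_mul_of_nonneg_right (hFx i) (norm_nonneg _)
    _ = α * (Real.sqrt k * l2norm x) * ∑ i, ‖e i‖ := by
        rw [← Finset.mul_sum]
    _ ≤ α * (Real.sqrt k * l2norm x) * (Real.sqrt t * l2norm e) := by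
        apply mul_le_mul_of_nonneg_left (sparse_l1_le e he) (by positivity)
    _ = α * Real.sqrt (k * t) * l2norm x * l2norm e := by
        rw [show ((k : ℝ) * t) = (k : ℝ) * (t : ℝ) by push_cast; ring,
          Real.sqrt_mul (by positivity)]
        ring
end

section
/- Let n, k, t be positive integers, let α ≥ 0 with α·√(k·t) ≤ 0.19, and let F ∈ ℂ^{n×n} be a unitary matrix all of whose entries satisfy |F_{ij}| ≤ α. Then for every k-sparse vector x̂ ∈ ℂ^n and every t-sparse vector e ∈ ℂ^n, 0.9·√(‖x̂‖₂² + ‖e‖₂²) ≤ ‖F^{-1}x̂ + e‖₂ ≤ 1.1·√(‖x̂‖₂² + ‖e‖₂²). -/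
/-- ℓ1–ℓ2 comparison for sparse vectors (Cauchy–Schwarz). -/
lemma sparse_l1_le_sqrt {n m : ℕ} (v : Fin n → ℂ) (hv : Sparse m v) :
    ∑ i, ‖v i‖ ≤ Real.sqrt m * Real.sqrt (∑ i, ‖v i‖ ^ 2) := by
  classical
  set s := Finset.univ.filter (fun i => v i ≠ 0) with hs
  have h1 : ∑ i, ‖v i‖ = ∑ i ∈ s, 1 * ‖v i‖ := by
    simp only [one_mul, hs, Finset.sum_filter]
    exact Finset.sum_congr rfl fun i _ => by by_cases h : v i = 0 <;> simp [h]
  rw [h1]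
  calc ∑ i ∈ s, 1 * ‖v i‖
      ≤ Real.sqrt (∑ i ∈ s, (1:ℝ)^2) * Real.sqrt (∑ i ∈ s, ‖v i‖^2) :=
        Real.sum_mul_le_sqrt_mul_sqrt s _ _
    _ ≤ Real.sqrt m * Real.sqrt (∑ i, ‖v i‖^2) := by
        apply mul_le_mul
        · apply Real.sqrt_le_sqrt
          simp only [one_pow, Finset.sum_const, nsmul_eq_mul, mul_one]
          exact_mod_cast hv
        · exact Real.sqrt_le_sqrt <| Finset.sum_le_sum_of_subset_of_nonneg (Finset.subset_univ s)
            (fun i _ _ => by positivity)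
        · positivity
        · positivity

lemma dot_star_self_eq {n : ℕ} (v : Fin n → ℂ) :
    dotProduct (star v) v = ((∑ i, ‖v i‖ ^ 2 : ℝ) : ℂ) := by
  simp [dotProduct, Complex.sq_norm, mul_comm, Complex.mul_conj]

/-- Restricted isometry property of `[F⁻¹ I]` (Lemma 2 with explicit constants):
if `α√(kt) ≤ 0.19` then `0.9·√(‖x̂‖² + ‖e‖²) ≤ ‖F⁻¹x̂ + e‖ ≤ 1.1·√(‖x̂‖² + ‖e‖²)`
for all `k`-sparse `x̂` and `t`-sparse `e`. Here `F⁻¹ = Fᴴ`. -/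
theorem rip_of_unitary_flat
    (n k t : ℕ) (hn : 0 < n) (hk : 0 < k) (ht : 0 < t) (α : ℝ) (hα : 0 ≤ α)
    (hαkt : α * Real.sqrt (k * t) ≤ 0.19)
    (F : Matrix (Fin n) (Fin n) ℂ)
    (hFunit : F * F.conjTranspose = 1 ∧ F.conjTranspose * F = 1)
    (hF : ∀ i j, ‖F i j‖ ≤ α)
    (xh : Fin n → ℂ) (hxh : Sparse k xh)
    (e : Fin n → ℂ) (he : Sparse t e) :
    0.9 * Real.sqrt (l2norm xh ^ 2 + l2norm e ^ 2) ≤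
        l2norm (F.conjTranspose.mulVec xh + e) ∧
      l2norm (F.conjTranspose.mulVec xh + e) ≤
        1.1 * Real.sqrt (l2norm xh ^ 2 + l2norm e ^ 2) := by
  classical
  obtain ⟨hFF, -⟩ := hFunit
  set u := F.conjTranspose.mulVec xh with hu
  set A := ∑ i, ‖xh i‖ ^ 2 with hA
  set B := ∑ i, ‖e i‖ ^ 2 with hB
  have hA0 : 0 ≤ A := Finset.sum_nonneg fun i _ => by positivity
  have hB0 : 0 ≤ B := Finset.sum_nonneg fun i _ => by positivity
  -- norm preservation
  have hU : ∑ i, ‖u i‖ ^ 2 = A := by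
    have h1 : dotProduct (star u) u = dotProduct (star xh) xh := by
      rw [hu, Matrix.star_mulVec, Matrix.conjTranspose_conjTranspose, Matrix.dotProduct_mulVec,
        Matrix.vecMul_vecMul, hFF, Matrix.vecMul_one]
    rw [dot_star_self_eq, dot_star_self_eq] at h1
    exact_mod_cast h1
  -- ℓ1 bounds
  have hx1 : ∑ i, ‖xh i‖ ≤ Real.sqrt k * Real.sqrt A :=
    sparse_l1_le_sqrt xh hxh
  have he1 : ∑ i, ‖e i‖ ≤ Real.sqrt t * Real.sqrt B :=
    sparse_l1_le_sqrt e he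
  have hx10 : 0 ≤ ∑ i, ‖xh i‖ := Finset.sum_nonneg fun i _ => by positivity
  have he10 : 0 ≤ ∑ i, ‖e i‖ := Finset.sum_nonneg fun i _ => by positivity
  -- pointwise bound on u
  have hub : ∀ i, ‖u i‖ ≤ α * ∑ j, ‖xh j‖ := by
    intro i
    have hui : u i = ∑ j, F.conjTranspose i j * xh j := rfl
    rw [hui]
    calc ‖∑ j, F.conjTranspose i j * xh j‖
        ≤ ∑ j, ‖F.conjTranspose i j * xh j‖ := norm_sum_le _ _
      _ ≤ ∑ j, α * ‖xh j‖ := by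
          refine Finset.sum_le_sum fun j _ => ?_
          rw [norm_mul]
          apply mul_le_mul_of_nonneg_right _ (by positivity)
          rw [Matrix.conjTranspose_apply]
          simpa using hF j i
      _ = α * ∑ j, ‖xh j‖ := (Finset.mul_sum _ _ _).symm
  -- the cross term
  set C := ∑ i, (u i * (starRingEnd ℂ) (e i)).re with hC
  have hCb : |C| ≤ α * Real.sqrt (↑k * ↑t) * (Real.sqrt A * Real.sqrt B) := by
    have h1 : |C| ≤ α * (∑ j, ‖xh j‖) * (∑ i, ‖e i‖) := by
      calc |C| = |(∑ i, u i * (starRingEnd ℂ) (e i)).re| := by rw [Complex.re_sum]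
        _ ≤ ‖∑ i, u i * (starRingEnd ℂ) (e i)‖ := Complex.abs_re_le_norm _
        _ ≤ ∑ i, ‖u i * (starRingEnd ℂ) (e i)‖ := norm_sum_le _ _
        _ = ∑ i, ‖u i‖ * ‖e i‖ := by
            simp [norm_mul, Complex.norm_conj]
        _ ≤ ∑ i, (α * ∑ j, ‖xh j‖) * ‖e i‖ :=
            Finset.sum_le_sum fun i _ => mul_le_mul_of_nonneg_right (hub i) (by positivity)
        _ = α * (∑ j, ‖xh j‖) * (∑ i, ‖e i‖) := by
            rw [← Finset.mul_sum]
    calc |C| ≤ α * (∑ j, ‖xh j‖) * (∑ i, ‖e i‖) := h1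
      _ ≤ α * (Real.sqrt k * Real.sqrt A) * (Real.sqrt t * Real.sqrt B) := by
          apply mul_le_mul (mul_le_mul_of_nonneg_left hx1 hα) he1 he10
          positivity
      _ = α * Real.sqrt (↑k * ↑t) * (Real.sqrt A * Real.sqrt B) := by
          rw [Real.sqrt_mul (by positivity)]
          ring
  have hC2 : |C| ≤ 0.095 * (A + B) := by
    have h2 : 2 * (Real.sqrt A * Real.sqrt B) ≤ A + B := by
      nlinarith [Real.sq_sqrt hA0, Real.sq_sqrt hB0, sq_nonneg (Real.sqrt A - Real.sqrt B)]
    have h3 : 0 ≤ Real.sqrt A * Real.sqrt B := by positivity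
    nlinarith [hαkt, Real.sqrt_nonneg ((k:ℝ) * t)]
  -- expansion of the squared norm
  have hexp : ∑ i, ‖(u + e) i‖ ^ 2 = A + B + 2 * C := by
    rw [← hU, hB, hC]
    simp only [Pi.add_apply, Complex.sq_norm, Complex.normSq_add]
    rw [Finset.sum_add_distrib, Finset.sum_add_distrib, ← Finset.mul_sum]
  have hsum0 : 0 ≤ A + B := by linarith
  have habs := abs_le.mp hC2
  have hlow : 0.81 * (A + B) ≤ ∑ i, ‖(u + e) i‖ ^ 2 := by
    rw [hexp]; linarith
  have hhigh : ∑ i, ‖(u + e) i‖ ^ 2 ≤ 1.21 * (A + B) := by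
    rw [hexp]; linarith
  -- convert goal
  have hgl : l2norm xh ^ 2 + l2norm e ^ 2 = A + B := by
    rw [l2norm, l2norm, Real.sq_sqrt hA0, Real.sq_sqrt hB0]
  have hs81 : Real.sqrt 0.81 = 0.9 := by
    rw [show (0.81:ℝ) = 0.9^2 by norm_num, Real.sqrt_sq (by norm_num)]
  have hs121 : Real.sqrt 1.21 = 1.1 := by
    rw [show (1.21:ℝ) = 1.1^2 by norm_num, Real.sqrt_sq (by norm_num)]
  rw [hgl]
  constructor
  · calc 0.9 * Real.sqrt (A + B) = Real.sqrt (0.81 * (A + B)) := by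
          rw [Real.sqrt_mul (by norm_num), hs81]
      _ ≤ l2norm (u + e) := Real.sqrt_le_sqrt hlow
  · calc l2norm (u + e) ≤ Real.sqrt (1.21 * (A + B)) := Real.sqrt_le_sqrt hhigh
      _ = 1.1 * Real.sqrt (A + B) := by rw [Real.sqrt_mul (by norm_num), hs121]
end

section
/- Let n, k, t be positive integers, let α ≥ 0 with 2α·√(k·t) < 1, and let F ∈ ℂ^{n×n} be a unitary matrix all of whose entries satisfy |F_{ij}| ≤ α. Suppose x̂₁, x̂₂ ∈ ℂ^n are k-sparse, e₁, e₂ ∈ ℂ^n are t-sparse, and F^{-1}x̂₁ + e₁ = F^{-1}x̂₂ + e₂. Then x̂₁ = x̂₂ and e₁ = e₂. -/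
/-- Uniqueness of the sparse-plus-corruption decomposition `y = F⁻¹x̂ + e`
when `2α√(kt) < 1` and `F` is unitary with entries of modulus at most `α`.
Here `F⁻¹ = Fᴴ`. -/
theorem sparse_decomposition_unique
    (n k t : ℕ) (hn : 0 < n) (hk : 0 < k) (ht : 0 < t) (α : ℝ) (hα : 0 ≤ α)
    (hαkt : 2 * α * Real.sqrt (k * t) < 1)
    (F : Matrix (Fin n) (Fin n) ℂ)
    (hFunit : F * F.conjTranspose = 1 ∧ F.conjTranspose * F = 1)
    (hF : ∀ i j, ‖F i j‖ ≤ α)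
    (xh₁ xh₂ : Fin n → ℂ) (hxh₁ : Sparse k xh₁) (hxh₂ : Sparse k xh₂)
    (e₁ e₂ : Fin n → ℂ) (he₁ : Sparse t e₁) (he₂ : Sparse t e₂)
    (heq : F.conjTranspose.mulVec xh₁ + e₁ = F.conjTranspose.mulVec xh₂ + e₂) :
    xh₁ = xh₂ ∧ e₁ = e₂ := by
  classical
  set x : Fin n → ℂ := xh₁ - xh₂ with hxdef
  set e : Fin n → ℂ := e₂ - e₁ with hedef
  have hxe : F.conjTranspose.mulVec x = e := by
    funext i
    have h := congrFun heq i
    simp only [Pi.add_apply] at h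
    simp only [hxdef, hedef, Matrix.mulVec_sub, Pi.sub_apply]
    linear_combination h
  have hfx : F.mulVec e = x := by
    rw [← hxe, Matrix.mulVec_mulVec, hFunit.1, Matrix.one_mulVec]
  set S := Finset.univ.filter (fun i => x i ≠ 0) with hS
  set T := Finset.univ.filter (fun j => e j ≠ 0) with hT
  have hScard : S.card ≤ 2 * k := by
    have hsub : S ⊆ (Finset.univ.filter (fun i => xh₁ i ≠ 0)) ∪
        (Finset.univ.filter (fun i => xh₂ i ≠ 0)) := by
      intro i hi
      simp only [hS, Finset.mem_filter, Finset.mem_univ, true_and] at hi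
      simp only [Finset.mem_union, Finset.mem_filter, Finset.mem_univ, true_and]
      by_contra hc
      push_neg at hc
      exact hi (by simp [hxdef, hc.1, hc.2])
    calc S.card ≤ _ := Finset.card_le_card hsub
      _ ≤ _ + _ := Finset.card_union_le _ _
      _ ≤ k + k := add_le_add hxh₁ hxh₂
      _ = 2 * k := by ring
  have hTcard : T.card ≤ 2 * t := by
    have hsub : T ⊆ (Finset.univ.filter (fun i => e₁ i ≠ 0)) ∪
        (Finset.univ.filter (fun i => e₂ i ≠ 0)) := by
      intro i hi
      simp only [hT, Finset.mem_filter, Finset.mem_univ, true_and] at hi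
      simp only [Finset.mem_union, Finset.mem_filter, Finset.mem_univ, true_and]
      by_contra hc
      push_neg at hc
      exact hi (by simp [hedef, hc.1, hc.2])
    calc T.card ≤ _ := Finset.card_le_card hsub
      _ ≤ _ + _ := Finset.card_union_le _ _
      _ ≤ t + t := add_le_add he₁ he₂
      _ = 2 * t := by ring
  set N : ℝ := ∑ i, Complex.normSq (x i) with hN
  have hNnonneg : 0 ≤ N := Finset.sum_nonneg fun i _ => Complex.normSq_nonneg _
  -- norm preservation: ∑ normSq (e j) = N
  have hEN : ∑ j, Complex.normSq (e j) = N := by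
    have hdot : dotProduct (star e) e = dotProduct (star x) x := by
      rw [← hxe, Matrix.star_mulVec, Matrix.dotProduct_mulVec, Matrix.vecMul_vecMul,
        Matrix.conjTranspose_conjTranspose, hFunit.1, Matrix.vecMul_one]
    have h1 : ∀ z : Fin n → ℂ, dotProduct (star z) z
        = ((∑ j, Complex.normSq (z j) : ℝ) : ℂ) := by
      intro z
      simp only [dotProduct, Pi.star_apply, Complex.ofReal_sum]
      exact Finset.sum_congr rfl fun j _ => by
        rw [Complex.star_def, mul_comm, Complex.mul_conj]
    rw [h1, h1] at hdot
    exact_mod_cast hdot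
  -- restrict sums to supports
  have hNS : N = ∑ i ∈ S, Complex.normSq (x i) := by
    rw [hN]
    refine (Finset.sum_subset (Finset.subset_univ S) ?_).symm
    intro i _ hi
    simp only [hS, Finset.mem_filter, Finset.mem_univ, true_and, not_not] at hi
    simp [hi]
  set B : ℝ := ∑ j ∈ T, ‖e j‖ with hB
  have hBnonneg : 0 ≤ B := Finset.sum_nonneg fun j _ => norm_nonneg _
  -- entrywise bound
  have hxi : ∀ i, ‖x i‖ ≤ α * B := by
    intro i
    have hxi' : x i = ∑ j ∈ T, F i j * e j := by
      rw [← hfx]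
      show ∑ j, F i j * e j = _
      refine (Finset.sum_subset (Finset.subset_univ T) ?_).symm
      intro j _ hj
      simp only [hT, Finset.mem_filter, Finset.mem_univ, true_and, not_not] at hj
      simp [hj]
    rw [hxi']
    calc ‖∑ j ∈ T, F i j * e j‖ ≤ ∑ j ∈ T, ‖F i j * e j‖ :=
          norm_sum_le _ _
      _ ≤ ∑ j ∈ T, α * ‖e j‖ := by
          refine Finset.sum_le_sum fun j _ => ?_
          rw [norm_mul]
          exact mul_le_mul_of_nonneg_right (hF i j) (norm_nonneg _)
      _ = α * B := by rw [hB, Finset.mul_sum]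
  -- Cauchy-Schwarz: B² ≤ T.card * N
  have hB2 : B ^ 2 ≤ (T.card : ℝ) * N := by
    have hcs := Finset.sum_mul_sq_le_sq_mul_sq T (fun _ => (1 : ℝ))
      (fun j => ‖e j‖)
    simp only [one_mul, one_pow, Finset.sum_const, nsmul_eq_mul, mul_one] at hcs
    refine hcs.trans (mul_le_mul_of_nonneg_left ?_ (Nat.cast_nonneg _))
    calc ∑ j ∈ T, ‖e j‖ ^ 2 = ∑ j ∈ T, Complex.normSq (e j) := by
          exact Finset.sum_congr rfl fun j _ => Complex.sq_norm _
      _ ≤ ∑ j, Complex.normSq (e j) :=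
          Finset.sum_le_sum_of_subset_of_nonneg (Finset.subset_univ T)
            (fun j _ _ => Complex.normSq_nonneg _)
      _ = N := hEN
  -- main estimate
  have hmain : N ≤ (2 * α * Real.sqrt (k * t)) ^ 2 * N := by
    have h1 : N ≤ (S.card : ℝ) * (α * B) ^ 2 := by
      rw [hNS]
      calc ∑ i ∈ S, Complex.normSq (x i) ≤ ∑ _i ∈ S, (α * B) ^ 2 := by
            refine Finset.sum_le_sum fun i _ => ?_
            rw [← Complex.sq_norm]
            exact pow_le_pow_left₀ (norm_nonneg _) (hxi i) 2
        _ = (S.card : ℝ) * (α * B) ^ 2 := by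
            rw [Finset.sum_const, nsmul_eq_mul]
    have h2 : (S.card : ℝ) * (α * B) ^ 2 ≤ (2 * k : ℝ) * (α ^ 2 * ((2 * t : ℝ) * N)) := by
      have hS2 : (S.card : ℝ) ≤ (2 * k : ℝ) := by exact_mod_cast hScard
      have hT2 : (T.card : ℝ) ≤ (2 * t : ℝ) := by exact_mod_cast hTcard
      have hB2' : B ^ 2 ≤ (2 * t : ℝ) * N :=
        hB2.trans (mul_le_mul_of_nonneg_right hT2 hNnonneg)
      have : (α * B) ^ 2 ≤ α ^ 2 * ((2 * t : ℝ) * N) := by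
        rw [mul_pow]
        exact mul_le_mul_of_nonneg_left hB2' (sq_nonneg _)
      calc (S.card : ℝ) * (α * B) ^ 2 ≤ (2 * k : ℝ) * (α * B) ^ 2 :=
            mul_le_mul_of_nonneg_right hS2 (sq_nonneg _)
        _ ≤ (2 * k : ℝ) * (α ^ 2 * ((2 * t : ℝ) * N)) :=
            mul_le_mul_of_nonneg_left this (by positivity)
    have h3 : (2 * k : ℝ) * (α ^ 2 * ((2 * t : ℝ) * N))
        = (2 * α * Real.sqrt (k * t)) ^ 2 * N := by
      have : Real.sqrt ((k : ℝ) * t) ^ 2 = (k : ℝ) * t :=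
        Real.sq_sqrt (by positivity)
      rw [mul_pow, mul_pow, this]; ring
    linarith [h1, h2]
  have hc1 : (2 * α * Real.sqrt (k * t)) ^ 2 < 1 := by
    have hnn : 0 ≤ 2 * α * Real.sqrt (k * t) := by positivity
    nlinarith
  have hN0 : N = 0 := by nlinarith
  have hx0 : ∀ i, x i = 0 := by
    intro i
    have := (Finset.sum_eq_zero_iff_of_nonneg
      (fun i _ => Complex.normSq_nonneg (x i))).mp hN0 i (Finset.mem_univ i)
    exact Complex.normSq_eq_zero.mp this
  have hx12 : xh₁ = xh₂ := by
    funext i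
    have := hx0 i
    simp only [hxdef, Pi.sub_apply, sub_eq_zero] at this
    exact this
  refine ⟨hx12, ?_⟩
  have := heq
  rw [hx12] at this
  exact add_left_cancel this
end

section
/- Let n, k, t be positive integers, let α ≥ 0 with 2α·√(k·t) ≤ 0.19, and let F ∈ ℂ^{n×n} be a unitary matrix all of whose entries satisfy |F_{ij}| ≤ α. Suppose x̂₁, x̂₂ ∈ ℂ^n are k-sparse, e₁, e₂ ∈ ℂ^n are t-sparse, and β ∈ ℂ^n satisfies F^{-1}x̂₁ + e₁ + β = F^{-1}x̂₂ + e₂. Then √(‖x̂₁ − x̂₂‖₂² + ‖e₁ − e₂‖₂²) ≤ ‖β‖₂ / 0.9. -/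
/-- Cauchy–Schwarz on the support: for an `m`-sparse vector,
`(∑ |v i|)² ≤ m * ∑ |v i|²`. -/
lemma sparse_sum_sq {n : ℕ} (m : ℕ) (v : Fin n → ℂ) (hv : Sparse m v) :
    (∑ i, ‖v i‖) ^ 2 ≤ (m : ℝ) * ∑ i, ‖v i‖ ^ 2 := by
  classical
  set s : Finset (Fin n) := Finset.univ.filter (fun i => v i ≠ 0) with hs
  have h1 : ∑ i, ‖v i‖ = ∑ i ∈ s, ‖v i‖ := by
    refine (Finset.sum_subset (Finset.subset_univ s) ?_).symm
    intro i _ hi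
    have : v i = 0 := by
      by_contra h
      exact hi (Finset.mem_filter.mpr ⟨Finset.mem_univ i, h⟩)
    simp [this]
  have h2 : (∑ i ∈ s, ‖v i‖) ^ 2 ≤
      (∑ i ∈ s, ‖v i‖ ^ 2) * (s.card : ℝ) := by
    have := Finset.sum_mul_sq_le_sq_mul_sq s (fun i => ‖v i‖) (fun _ => (1 : ℝ))
    simpa using this
  have h3 : (∑ i ∈ s, ‖v i‖ ^ 2) ≤ ∑ i, ‖v i‖ ^ 2 :=
    Finset.sum_le_sum_of_subset_of_nonneg (Finset.subset_univ s)
      (fun i _ _ => by positivity)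
  have hcard : (s.card : ℝ) ≤ (m : ℝ) := by exact_mod_cast hv
  calc (∑ i, ‖v i‖) ^ 2 = (∑ i ∈ s, ‖v i‖) ^ 2 := by rw [h1]
    _ ≤ (∑ i ∈ s, ‖v i‖ ^ 2) * (s.card : ℝ) := h2
    _ ≤ (∑ i, ‖v i‖ ^ 2) * (m : ℝ) := by
        apply mul_le_mul h3 hcard (by positivity) (by positivity)
    _ = (m : ℝ) * ∑ i, ‖v i‖ ^ 2 := mul_comm _ _

lemma sparse_sub {n : ℕ} (k : ℕ) (v w : Fin n → ℂ) (hv : Sparse k v) (hw : Sparse k w) :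
    Sparse (2 * k) (v - w) := by
  classical
  unfold Sparse at *
  have hsub : (Finset.univ.filter (fun i => (v - w) i ≠ 0)) ⊆
      (Finset.univ.filter (fun i => v i ≠ 0)) ∪ (Finset.univ.filter (fun i => w i ≠ 0)) := by
    intro i hi
    simp only [Finset.mem_filter, Finset.mem_univ, true_and] at hi
    simp only [Finset.mem_union, Finset.mem_filter, Finset.mem_univ, true_and]
    by_contra h
    push_neg at h
    simp [Pi.sub_apply, h.1, h.2] at hi
  calc _ ≤ _ := Finset.card_le_card hsub
    _ ≤ _ := Finset.card_union_le _ _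
    _ ≤ 2 * k := by omega

set_option maxHeartbeats 1000000

/-- Stability of the sparse-plus-corruption decomposition: if `2α√(kt) ≤ 0.19` and
`F⁻¹x̂₁ + e₁ + β = F⁻¹x̂₂ + e₂` with `x̂ᵢ` `k`-sparse and `eᵢ` `t`-sparse, then
`√(‖x̂₁ − x̂₂‖² + ‖e₁ − e₂‖²) ≤ ‖β‖ / 0.9`. Here `F⁻¹ = Fᴴ`. -/
theorem sparse_decomposition_stable
    (n k t : ℕ) (hn : 0 < n) (hk : 0 < k) (ht : 0 < t) (α : ℝ) (hα : 0 ≤ α)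
    (hαkt : 2 * α * Real.sqrt (k * t) ≤ 0.19)
    (F : Matrix (Fin n) (Fin n) ℂ)
    (hFunit : F * F.conjTranspose = 1 ∧ F.conjTranspose * F = 1)
    (hF : ∀ i j, ‖F i j‖ ≤ α)
    (xh₁ xh₂ : Fin n → ℂ) (hxh₁ : Sparse k xh₁) (hxh₂ : Sparse k xh₂)
    (e₁ e₂ : Fin n → ℂ) (he₁ : Sparse t e₁) (he₂ : Sparse t e₂)
    (β : Fin n → ℂ)
    (heq : F.conjTranspose.mulVec xh₁ + e₁ + β = F.conjTranspose.mulVec xh₂ + e₂) :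
    Real.sqrt (l2norm (xh₁ - xh₂) ^ 2 + l2norm (e₁ - e₂) ^ 2) ≤ l2norm β / 0.9 := by
  classical
  set x : Fin n → ℂ := xh₁ - xh₂ with hxdef
  set e : Fin n → ℂ := e₁ - e₂ with hedef
  set y : Fin n → ℂ := F.conjTranspose.mulVec x with hydef
  -- β = -(y + e)
  have hβ : ∀ j, β j = -(y j + e j) := by
    intro j
    have h := congrFun heq j
    simp only [Pi.add_apply] at h
    have hy' : y j = F.conjTranspose.mulVec xh₁ j - F.conjTranspose.mulVec xh₂ j := by
      rw [hydef, hxdef, Matrix.mulVec_sub]; rfl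
    have he' : e j = e₁ j - e₂ j := rfl
    rw [hy', he']
    linear_combination h
  set P : ℝ := ∑ i, ‖x i‖ ^ 2 with hPdef
  set Q : ℝ := ∑ i, ‖e i‖ ^ 2 with hQdef
  set B2 : ℝ := ∑ j, ‖β j‖ ^ 2 with hB2def
  have hP0 : 0 ≤ P := Finset.sum_nonneg fun _ _ => by positivity
  have hQ0 : 0 ≤ Q := Finset.sum_nonneg fun _ _ => by positivity
  have hB20 : 0 ≤ B2 := Finset.sum_nonneg fun _ _ => by positivity
  -- unitarity: ∑ |y j|² = P
  have hPy : ∑ j, Complex.normSq (y j) = ∑ i, Complex.normSq (x i) := by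
    have key : dotProduct (star y) y = dotProduct (star x) x := by
      rw [hydef, Matrix.star_mulVec, Matrix.conjTranspose_conjTranspose,
        Matrix.dotProduct_mulVec, Matrix.vecMul_vecMul, hFunit.1, Matrix.vecMul_one]
    have hy2 : dotProduct (star y) y = ((∑ j, Complex.normSq (y j) : ℝ) : ℂ) := by
      simp only [dotProduct, Pi.star_apply, Complex.ofReal_sum]
      exact Finset.sum_congr rfl fun j _ => by
        rw [Complex.normSq_eq_conj_mul_self]; rfl
    have hx2 : dotProduct (star x) x = ((∑ i, Complex.normSq (x i) : ℝ) : ℂ) := by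
      simp only [dotProduct, Pi.star_apply, Complex.ofReal_sum]
      exact Finset.sum_congr rfl fun j _ => by
        rw [Complex.normSq_eq_conj_mul_self]; rfl
    exact_mod_cast hy2 ▸ hx2 ▸ key
  set C : ℝ := ∑ j, (y j * (starRingEnd ℂ) (e j)).re with hCdef
  -- B2 = P + Q + 2C
  have hB2 : B2 = P + Q + 2 * C := by
    have : ∀ j, ‖β j‖ ^ 2 =
        ‖y j‖ ^ 2 + ‖e j‖ ^ 2 + 2 * (y j * (starRingEnd ℂ) (e j)).re := by
      intro j
      rw [hβ j, Complex.sq_norm, Complex.normSq_neg, Complex.normSq_add,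
        ← Complex.sq_norm, ← Complex.sq_norm]
    have hPy' : ∑ j, ‖y j‖ ^ 2 = P := by
      simp only [Complex.sq_norm]
      rw [hPy, hPdef]
      simp [Complex.sq_norm]
    rw [hB2def]
    calc ∑ j, ‖β j‖ ^ 2
        = ∑ j, (‖y j‖ ^ 2 + ‖e j‖ ^ 2
            + 2 * (y j * (starRingEnd ℂ) (e j)).re) := Finset.sum_congr rfl fun j _ => this j
      _ = P + Q + 2 * C := by
          rw [Finset.sum_add_distrib, Finset.sum_add_distrib, hPy', ← Finset.mul_sum]
  -- pointwise bound on |y j|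
  set A : ℝ := ∑ i, ‖x i‖ with hAdef
  set Eb : ℝ := ∑ j, ‖e j‖ with hEbdef
  have hA0 : 0 ≤ A := Finset.sum_nonneg fun _ _ => by positivity
  have hEb0 : 0 ≤ Eb := Finset.sum_nonneg fun _ _ => by positivity
  have hyj : ∀ j, ‖y j‖ ≤ α * A := by
    intro j
    have h1 : y j = ∑ i, F.conjTranspose j i * x i := by
      simp [hydef, Matrix.mulVec, dotProduct]
    rw [h1]
    calc ‖∑ i, F.conjTranspose j i * x i‖
        ≤ ∑ i, ‖F.conjTranspose j i * x i‖ :=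
          norm_sum_le _ _
      _ = ∑ i, ‖F.conjTranspose j i‖ * ‖x i‖ := by
          simp [map_mul]
      _ ≤ ∑ i, α * ‖x i‖ := by
          apply Finset.sum_le_sum
          intro i _
          apply mul_le_mul_of_nonneg_right _ (by positivity)
          simpa [Matrix.conjTranspose_apply] using hF i j
      _ = α * A := by rw [← Finset.mul_sum, ← hAdef]
  -- cross-term bound
  have hC : |C| ≤ α * A * Eb := by
    calc |C| ≤ ∑ j, |(y j * (starRingEnd ℂ) (e j)).re| :=
          Finset.abs_sum_le_sum_abs _ _
      _ ≤ ∑ j, (α * A) * ‖e j‖ := by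
          apply Finset.sum_le_sum
          intro j _
          calc |(y j * (starRingEnd ℂ) (e j)).re| ≤ ‖y j * (starRingEnd ℂ) (e j)‖ :=
                Complex.abs_re_le_norm _
            _ = ‖y j‖ * ‖e j‖ := by simp [map_mul]
            _ ≤ (α * A) * ‖e j‖ :=
                mul_le_mul_of_nonneg_right (hyj j) (by positivity)
      _ = α * A * Eb := by rw [← Finset.mul_sum, ← hEbdef]
  -- sparsity bounds
  have hA2 : A ^ 2 ≤ (2 * k : ℕ) * P := sparse_sum_sq (2 * k) x (sparse_sub k xh₁ xh₂ hxh₁ hxh₂)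
  have hE2 : Eb ^ 2 ≤ (2 * t : ℕ) * Q := sparse_sum_sq (2 * t) e (sparse_sub t e₁ e₂ he₁ he₂)
  have hA2' : A ^ 2 ≤ 2 * (k : ℝ) * P := by push_cast at hA2 ⊢; linarith
  have hE2' : Eb ^ 2 ≤ 2 * (t : ℝ) * Q := by push_cast at hE2 ⊢; linarith
  -- rewrite the goal in terms of P, Q, B2 and forget definitions
  have hl2x : l2norm x = Real.sqrt P := by rw [l2norm]
  have hl2e : l2norm e = Real.sqrt Q := by rw [l2norm]
  have hl2b : l2norm β = Real.sqrt B2 := by rw [l2norm]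
  rw [hl2x, hl2e, hl2b, Real.sq_sqrt hP0, Real.sq_sqrt hQ0]
  clear hl2x hl2e hl2b hyj hβ hPy heq
  clear_value C A Eb B2 P Q y e x
  -- numeric bound: 4 α² k t ≤ 0.0361
  have hkt : 4 * α ^ 2 * ((k : ℝ) * t) ≤ 0.0361 := by
    have h1 : (0:ℝ) ≤ Real.sqrt ((k : ℝ) * t) := Real.sqrt_nonneg _
    have h2 : Real.sqrt ((k : ℝ) * t) ^ 2 = (k : ℝ) * t :=
      Real.sq_sqrt (by positivity)
    have h3 : (0:ℝ) ≤ 2 * α * Real.sqrt ((k : ℝ) * t) := by positivity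
    have := hαkt
    push_cast at this
    nlinarith [sq_nonneg (2 * α * Real.sqrt ((k : ℝ) * t))]
  -- key quadratic bound: 2 α A Eb ≤ 0.19 (P + Q)
  have hcross : 2 * (α * A * Eb) ≤ 0.19 * (P + Q) := by
    have hsq : (2 * (α * A * Eb)) ^ 2 ≤ 0.0361 * (P + Q) ^ 2 := by
      have h1 : (2 * (α * A * Eb)) ^ 2 = 4 * α ^ 2 * (A ^ 2 * Eb ^ 2) := by ring
      have h2 : A ^ 2 * Eb ^ 2 ≤ (2 * (k:ℝ) * P) * (2 * (t:ℝ) * Q) :=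
        mul_le_mul hA2' hE2' (sq_nonneg _) (by positivity)
      have h3 : 4 * α ^ 2 * (A ^ 2 * Eb ^ 2) ≤
          4 * α ^ 2 * ((2 * (k:ℝ) * P) * (2 * (t:ℝ) * Q)) :=
        mul_le_mul_of_nonneg_left h2 (by positivity)
      have h4 : 4 * α ^ 2 * ((2 * (k:ℝ) * P) * (2 * (t:ℝ) * Q)) =
          (4 * α ^ 2 * ((k:ℝ) * t)) * (4 * (P * Q)) := by ring
      have h5 : (4 * α ^ 2 * ((k:ℝ) * t)) * (4 * (P * Q)) ≤ 0.0361 * (4 * (P * Q)) :=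
        mul_le_mul_of_nonneg_right hkt (by positivity)
      have h6 : 0.0361 * (4 * (P * Q)) ≤ 0.0361 * (P + Q) ^ 2 := by
        nlinarith [sq_nonneg (P - Q)]
      calc (2 * (α * A * Eb)) ^ 2 = 4 * α ^ 2 * (A ^ 2 * Eb ^ 2) := h1
        _ ≤ 4 * α ^ 2 * ((2 * (k:ℝ) * P) * (2 * (t:ℝ) * Q)) := h3
        _ = (4 * α ^ 2 * ((k:ℝ) * t)) * (4 * (P * Q)) := h4
        _ ≤ 0.0361 * (4 * (P * Q)) := h5
        _ ≤ 0.0361 * (P + Q) ^ 2 := h6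
    have h4 : (0:ℝ) ≤ 2 * (α * A * Eb) := by positivity
    have h5 : (0:ℝ) ≤ 0.19 * (P + Q) := by positivity
    have hsq' : (2 * (α * A * Eb)) ^ 2 ≤ (0.19 * (P + Q)) ^ 2 := by
      calc (2 * (α * A * Eb)) ^ 2 ≤ 0.0361 * (P + Q) ^ 2 := hsq
        _ = (0.19 * (P + Q)) ^ 2 := by ring
    exact (pow_le_pow_iff_left₀ h4 h5 two_ne_zero).mp hsq'
  -- B2 ≥ 0.81 (P + Q)
  have hmain : 0.81 * (P + Q) ≤ B2 := by
    have hCl : -(α * A * Eb) ≤ C := neg_le_of_abs_le hC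
    rw [hB2]
    linarith
  -- finish
  rw [le_div_iff₀ (by norm_num : (0:ℝ) < 0.9)]
  have h9 : Real.sqrt (0.81 * (P + Q)) = 0.9 * Real.sqrt (P + Q) := by
    rw [Real.sqrt_mul (by norm_num) _, show (0.81:ℝ) = 0.9 ^ 2 by norm_num,
      Real.sqrt_sq (by norm_num)]
  calc Real.sqrt (P + Q) * 0.9 = Real.sqrt (0.81 * (P + Q)) := by rw [h9]; ring
    _ ≤ Real.sqrt B2 := Real.sqrt_le_sqrt hmain
end

section
/- Let n, k, t be positive integers and let F ∈ ℂ^{n×n} be a unitary matrix. Assume that for every 3k-sparse vector x̂' ∈ ℂ^n and every 3t-sparse vector e' ∈ ℂ^n, 0.9·√(‖x̂'‖₂² + ‖e'‖₂²) ≤ ‖F^{-1}x̂' + e'‖₂ ≤ 1.1·√(‖x̂'‖₂² + ‖e'‖₂²). Let x̂ ∈ ℂ^n be k-sparse, e ∈ ℂ^n be t-sparse, β ∈ ℂ^n be arbitrary, and y = F^{-1}x̂ + e + β. Let (x̂^{[i]}, e^{[i]})_{i≥1} be an IHT sequence for (y, F, k, t). Then for every positive integer T, √(‖x̂^{[T+1]}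 − x̂‖₂² + ‖e^{[T+1]} − e‖₂²) ≤ 2^{-T}·√(‖x̂‖₂² + ‖e‖₂²) + 4‖β‖₂. -/
/-- `w` is a best `k`-sparse approximation of `u`. -/
def BestSparseApprox {n : ℕ} (k : ℕ) (u w : Fin n → ℂ) : Prop :=
  Sparse k w ∧ ∀ w', Sparse k w' → l2norm (u - w) ≤ l2norm (u - w')

/-- `(xh, eh)` is an IHT sequence for `(y, F, k, t)`: starting from the all-zeros vectors,
each iterate projects onto best `k`-sparse (resp. `t`-sparse) approximations.
Here `F⁻¹ = Fᴴ` since `F` is unitary. -/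
def IHTSeq {n : ℕ} (y : Fin n → ℂ) (F : Matrix (Fin n) (Fin n) ℂ) (k t : ℕ)
    (xh eh : ℕ → Fin n → ℂ) : Prop :=
  xh 1 = 0 ∧ eh 1 = 0 ∧
    ∀ i, 1 ≤ i →
      BestSparseApprox k (F.mulVec (y - eh i)) (xh (i + 1)) ∧
      BestSparseApprox t (y - F.conjTranspose.mulVec (xh i)) (eh (i + 1))

/- ### Auxiliary machinery -/

abbrev Evec (n : ℕ) := EuclideanSpace ℂ (Fin n)
abbrev Zvec (n : ℕ) := WithLp 2 (Evec n × Evec n)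

noncomputable def mkE {n : ℕ} (x : Fin n → ℂ) : Evec n := (WithLp.equiv 2 _).symm x
noncomputable def mkZ {n : ℕ} (x e : Fin n → ℂ) : Zvec n :=
  (WithLp.equiv 2 _).symm (mkE x, mkE e)

lemma l2norm_eq_norm {n : ℕ} (x : Fin n → ℂ) : l2norm x = ‖mkE x‖ := by
  rw [EuclideanSpace.norm_eq]
  simp [l2norm, mkE]

lemma mkZ_fst {n : ℕ} (x e : Fin n → ℂ) : (mkZ x e).ofLp.1 = mkE x := rfl
lemma mkZ_snd {n : ℕ} (x e : Fin n → ℂ) : (mkZ x e).ofLp.2 = mkE e := rfl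

lemma norm_mkZ {n : ℕ} (x e : Fin n → ℂ) :
    ‖mkZ x e‖ = Real.sqrt (l2norm x ^ 2 + l2norm e ^ 2) := by
  rw [WithLp.prod_norm_eq_of_L2, l2norm_eq_norm, l2norm_eq_norm]; rfl

lemma mkE_add {n : ℕ} (x y : Fin n → ℂ) : mkE (x + y) = mkE x + mkE y := rfl
lemma mkE_sub {n : ℕ} (x y : Fin n → ℂ) : mkE (x - y) = mkE x - mkE y := rfl
lemma mkZ_add {n : ℕ} (x e x' e' : Fin n → ℂ) :
    mkZ (x + x') (e + e') = mkZ x e + mkZ x' e' := rfl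
lemma mkZ_sub {n : ℕ} (x e x' e' : Fin n → ℂ) :
    mkZ (x - x') (e - e') = mkZ x e - mkZ x' e' := rfl
lemma mkZ_smul {n : ℕ} (c : ℂ) (x e : Fin n → ℂ) :
    mkZ (c • x) (c • e) = c • mkZ x e := rfl

noncomputable def spt {n : ℕ} (x : Fin n → ℂ) : Finset (Fin n) :=
  Finset.univ.filter (fun i => x i ≠ 0)

lemma sparse_iff {n k : ℕ} (x : Fin n → ℂ) : Sparse k x ↔ (spt x).card ≤ k := Iff.rfl

lemma not_mem_spt {n : ℕ} {x : Fin n → ℂ} {i : Fin n} (h : i ∉ spt x) : x i = 0 := by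
  by_contra hx
  exact h (by simp [spt, hx])

noncomputable def res {n : ℕ} (S : Finset (Fin n)) (x : Fin n → ℂ) : Fin n → ℂ :=
  fun i => if i ∈ S then x i else 0

lemma spt_res_subset {n : ℕ} (S : Finset (Fin n)) (x : Fin n → ℂ) : spt (res S x) ⊆ S := by
  intro i hi
  simp only [spt, Finset.mem_filter, res] at hi
  by_contra h
  simp [h] at hi

lemma sparse_of_spt_subset {n k : ℕ} {x : Fin n → ℂ} {S : Finset (Fin n)}
    (h : spt x ⊆ S) (hS : S.card ≤ k) : Sparse k x :=
  le_trans (Finset.card_le_card h) hS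

lemma res_eq_self {n : ℕ} {S : Finset (Fin n)} {x : Fin n → ℂ} (h : spt x ⊆ S) :
    res S x = x := by
  funext i
  by_cases hi : i ∈ S
  · simp [res, hi]
  · simp only [res, if_neg hi]
    exact (not_mem_spt (fun hm => hi (h hm))).symm

lemma res_add {n : ℕ} (S : Finset (Fin n)) (x y : Fin n → ℂ) :
    res S (x + y) = res S x + res S y := by
  funext i; by_cases hi : i ∈ S <;> simp [res, hi]

lemma res_sub {n : ℕ} (S : Finset (Fin n)) (x y : Fin n → ℂ) :
    res S (x - y) = res S x - res S y := by
  funext i; by_cases hi : i ∈ S <;> simp [res, hi]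

lemma spt_add_subset {n : ℕ} (x y : Fin n → ℂ) : spt (x + y) ⊆ spt x ∪ spt y := by
  intro i hi
  simp only [spt, Finset.mem_filter, Finset.mem_union, Finset.mem_univ, true_and] at *
  by_contra h
  push_neg at h
  simp [h.1, h.2] at hi

lemma spt_sub_subset {n : ℕ} (x y : Fin n → ℂ) : spt (x - y) ⊆ spt x ∪ spt y := by
  intro i hi
  simp only [spt, Finset.mem_filter, Finset.mem_union, Finset.mem_univ, true_and] at *
  by_contra h
  push_neg at h
  simp [h.1, h.2] at hi

lemma spt_smul_subset {n : ℕ} (c : ℂ) (x : Fin n → ℂ) : spt (c • x) ⊆ spt x := by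
  intro i hi
  simp only [spt, Finset.mem_filter, Finset.mem_univ, true_and, Pi.smul_apply,
    smul_eq_mul, mul_ne_zero_iff] at *
  exact hi.2

lemma spt_zero {n : ℕ} : spt (0 : Fin n → ℂ) = ∅ := by simp [spt]

lemma normsq_eq {n : ℕ} (x : Fin n → ℂ) : ‖mkE x‖ ^ 2 = ∑ i, ‖x i‖ ^ 2 := by
  rw [EuclideanSpace.norm_eq, Real.sq_sqrt]
  · rfl
  · positivity

lemma norm_res_mono {n : ℕ} {S T : Finset (Fin n)} (h : S ⊆ T) (x : Fin n → ℂ) :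
    ‖mkE (res S x)‖ ≤ ‖mkE (res T x)‖ := by
  rw [EuclideanSpace.norm_eq, EuclideanSpace.norm_eq]
  apply Real.sqrt_le_sqrt
  apply Finset.sum_le_sum
  intro i _
  show ‖res S x i‖ ^ 2 ≤ ‖res T x i‖ ^ 2
  by_cases hi : i ∈ S
  · simp [res, hi, h hi]
  · simp [res, hi]

lemma pythag {n : ℕ} (S : Finset (Fin n)) (x : Fin n → ℂ) :
    ‖mkE x‖ ^ 2 = ‖mkE (res S x)‖ ^ 2 + ‖mkE (x - res S x)‖ ^ 2 := by
  rw [normsq_eq, normsq_eq, normsq_eq, ← Finset.sum_add_distrib]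
  apply Finset.sum_congr rfl
  intro i _
  show ‖x i‖ ^ 2 = ‖res S x i‖ ^ 2 + ‖x i - res S x i‖ ^ 2
  by_cases hi : i ∈ S <;> simp [res, hi]

lemma inner_res_left {n : ℕ} (S : Finset (Fin n)) (x y : Fin n → ℂ) :
    (inner ℂ (mkE (res S x)) (mkE y) : ℂ) = inner ℂ (mkE (res S x)) (mkE (res S y)) := by
  rw [PiLp.inner_apply, PiLp.inner_apply]
  apply Finset.sum_congr rfl
  intro i _
  show inner ℂ (res S x i) (y i) = inner ℂ (res S x i) (res S y i)
  by_cases hi : i ∈ S <;> simp [res, hi]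

lemma inner_adj {n : ℕ} (F : Matrix (Fin n) (Fin n) ℂ) (x v : Fin n → ℂ) :
    (inner ℂ (mkE (F.conjTranspose.mulVec x)) (mkE v) : ℂ) = inner ℂ (mkE x) (mkE (F.mulVec v)) := by
  simp only [PiLp.inner_apply, RCLike.inner_apply]
  show ∑ j, v j * (starRingEnd ℂ) (F.conjTranspose.mulVec x j)
      = ∑ i, F.mulVec v i * (starRingEnd ℂ) (x i)
  simp only [Matrix.mulVec, dotProduct, Matrix.conjTranspose_apply, map_sum, map_mul,
    Finset.sum_mul, Finset.mul_sum, RingHomCompTriple.comp_apply, RCLike.star_def,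
    starRingEnd_self_apply]
  rw [Finset.sum_comm]
  apply Finset.sum_congr rfl; intro i _; apply Finset.sum_congr rfl; intro j _
  simp only [RingHom.id_apply]; ring

def unE {n : ℕ} (v : Evec n) : Fin n → ℂ := fun i => v i

lemma unE_mkE {n : ℕ} (x : Fin n → ℂ) : unE (mkE x) = x := rfl

noncomputable def Mop {n : ℕ} (F : Matrix (Fin n) (Fin n) ℂ) (p : Zvec n) : Evec n :=
  mkE (F.conjTranspose.mulVec (unE p.ofLp.1) + unE p.ofLp.2)

lemma Mop_mkZ {n : ℕ} (F : Matrix (Fin n) (Fin n) ℂ) (x e : Fin n → ℂ) :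
    Mop F (mkZ x e) = mkE (F.conjTranspose.mulVec x) + mkE e := rfl

lemma Mop_add {n : ℕ} (F : Matrix (Fin n) (Fin n) ℂ) (p q : Zvec n) :
    Mop F (p + q) = Mop F p + Mop F q := by
  show mkE (F.conjTranspose.mulVec (unE (p+q).ofLp.1) + unE (p+q).ofLp.2) = _
  have h1 : unE (p+q).ofLp.1 = unE p.ofLp.1 + unE q.ofLp.1 := rfl
  have h2 : unE (p+q).ofLp.2 = unE p.ofLp.2 + unE q.ofLp.2 := rfl
  rw [h1, h2, Matrix.mulVec_add]
  ext i
  show _ = (mkE (F.conjTranspose.mulVec (unE p.ofLp.1) + unE p.ofLp.2)) i + (mkE (F.conjTranspose.mulVec (unE q.ofLp.1) + unE q.ofLp.2)) i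
  simp [mkE]
  ring

lemma Mop_sub {n : ℕ} (F : Matrix (Fin n) (Fin n) ℂ) (p q : Zvec n) :
    Mop F (p - q) = Mop F p - Mop F q := by
  show mkE (F.conjTranspose.mulVec (unE (p-q).ofLp.1) + unE (p-q).ofLp.2) = _
  have h1 : unE (p-q).ofLp.1 = unE p.ofLp.1 - unE q.ofLp.1 := rfl
  have h2 : unE (p-q).ofLp.2 = unE p.ofLp.2 - unE q.ofLp.2 := rfl
  rw [h1, h2, Matrix.mulVec_sub]
  ext i
  show _ = (mkE (F.conjTranspose.mulVec (unE p.ofLp.1) + unE p.ofLp.2)) i - (mkE (F.conjTranspose.mulVec (unE q.ofLp.1) + unE q.ofLp.2)) i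
  simp [mkE]
  ring

lemma Mop_smul {n : ℕ} (F : Matrix (Fin n) (Fin n) ℂ) (c : ℂ) (p : Zvec n) :
    Mop F (c • p) = c • Mop F p := by
  show mkE (F.conjTranspose.mulVec (unE ((c • p : Zvec n)).ofLp.1) + unE ((c • p : Zvec n)).ofLp.2) = _
  have h1 : unE ((c • p : Zvec n)).ofLp.1 = c • unE p.ofLp.1 := rfl
  have h2 : unE ((c • p : Zvec n)).ofLp.2 = c • unE p.ofLp.2 := rfl
  rw [h1, h2, Matrix.mulVec_smul]
  ext i
  show _ = (c • (mkE (F.conjTranspose.mulVec (unE p.ofLp.1) + unE p.ofLp.2) : Evec n)) i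
  simp [mkE, Mop]

lemma mkZ_eta {n : ℕ} (p : Zvec n) : mkZ (unE p.ofLp.1) (unE p.ofLp.2) = p := rfl

def RIPhyp (n k t : ℕ) (F : Matrix (Fin n) (Fin n) ℂ) : Prop :=
  ∀ (xh' e' : Fin n → ℂ), Sparse (3 * k) xh' → Sparse (3 * t) e' →
      0.9 * Real.sqrt (l2norm xh' ^ 2 + l2norm e' ^ 2) ≤
          l2norm (F.conjTranspose.mulVec xh' + e') ∧
        l2norm (F.conjTranspose.mulVec xh' + e') ≤
          1.1 * Real.sqrt (l2norm xh' ^ 2 + l2norm e' ^ 2)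

variable {n k t : ℕ} {F : Matrix (Fin n) (Fin n) ℂ}

lemma ripZ (hRIP : RIPhyp n k t F) (p : Zvec n)
    (h1 : Sparse (3 * k) (unE p.ofLp.1)) (h2 : Sparse (3 * t) (unE p.ofLp.2)) :
    0.9 * ‖p‖ ≤ ‖Mop F p‖ ∧ ‖Mop F p‖ ≤ 1.1 * ‖p‖ := by
  obtain ⟨hl, hr⟩ := hRIP (unE p.ofLp.1) (unE p.ofLp.2) h1 h2
  have e1 : l2norm (F.conjTranspose.mulVec (unE p.ofLp.1) + unE p.ofLp.2) = ‖Mop F p‖ := by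
    rw [l2norm_eq_norm]; rfl
  have e2 : Real.sqrt (l2norm (unE p.ofLp.1) ^ 2 + l2norm (unE p.ofLp.2) ^ 2) = ‖p‖ := by
    rw [← norm_mkZ, mkZ_eta]
  rw [e1, e2] at hl hr
  exact ⟨hl, hr⟩

lemma polar (hRIP : RIPhyp n k t F) (p q : Zvec n)
    (h1 : Sparse (3 * k) (unE (p + q).ofLp.1)) (h2 : Sparse (3 * t) (unE (p + q).ofLp.2))
    (h3 : Sparse (3 * k) (unE (p - q).ofLp.1)) (h4 : Sparse (3 * t) (unE (p - q).ofLp.2)) :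
    RCLike.re (inner ℂ (Mop F p) (Mop F q) : ℂ) - RCLike.re (inner ℂ p q : ℂ) ≤
      0.105 * (‖p‖ ^ 2 + ‖q‖ ^ 2) := by
  have h1' := (ripZ hRIP (p + q) h1 h2).2
  have h2' := (ripZ hRIP (p - q) h3 h4).1
  rw [Mop_add] at h1'
  rw [Mop_sub] at h2'
  have hX : ‖Mop F p + Mop F q‖ ^ 2 ≤ 1.1 ^ 2 * ‖p + q‖ ^ 2 := by
    nlinarith [norm_nonneg (Mop F p + Mop F q), norm_nonneg (p + q)]
  have hY : 0.9 ^ 2 * ‖p - q‖ ^ 2 ≤ ‖Mop F p - Mop F q‖ ^ 2 := by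
    nlinarith [norm_nonneg (Mop F p - Mop F q), norm_nonneg (p - q)]
  have ha := re_inner_eq_norm_add_mul_self_sub_norm_sub_mul_self_div_four (𝕜 := ℂ)
    (Mop F p) (Mop F q)
  have hb := re_inner_eq_norm_add_mul_self_sub_norm_sub_mul_self_div_four (𝕜 := ℂ) p q
  have par := parallelogram_law_with_norm ℂ p q
  rw [ha, hb]
  nlinarith [hX, hY, par]

lemma Mop_zero : Mop F (0 : Zvec n) = 0 := by
  have h1 : unE ((0 : Zvec n)).ofLp.1 = 0 := rfl
  have h2 : unE ((0 : Zvec n)).ofLp.2 = 0 := rfl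
  show mkE (F.conjTranspose.mulVec (unE (0 : Zvec n).ofLp.1) + unE (0 : Zvec n).ofLp.2) = 0
  rw [h1, h2, Matrix.mulVec_zero]
  ext i
  simp [mkE]

lemma polar_scaled (hRIP : RIPhyp n k t F) (Sx Se : Finset (Fin n))
    (hSx : Sx.card ≤ 3 * k) (hSe : Se.card ≤ 3 * t) (p q : Zvec n)
    (hp1 : spt (unE p.ofLp.1) ⊆ Sx) (hq1 : spt (unE q.ofLp.1) ⊆ Sx)
    (hp2 : spt (unE p.ofLp.2) ⊆ Se) (hq2 : spt (unE q.ofLp.2) ⊆ Se) :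
    RCLike.re (inner ℂ (Mop F p) (Mop F q) : ℂ) - RCLike.re (inner ℂ p q : ℂ) ≤
      0.21 * (‖p‖ * ‖q‖) := by
  by_cases hp0 : p = 0
  · subst hp0
    rw [Mop_zero]
    simp
  by_cases hq0 : q = 0
  · subst hq0
    rw [Mop_zero]
    simp
  have hpn : 0 < ‖p‖ := norm_pos_iff.mpr hp0
  have hqn : 0 < ‖q‖ := norm_pos_iff.mpr hq0
  set c : ℝ := Real.sqrt (‖q‖ / ‖p‖) with hc
  have hcpos : 0 < c := Real.sqrt_pos.mpr (div_pos hqn hpn)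
  have hcsq : c ^ 2 = ‖q‖ / ‖p‖ := Real.sq_sqrt (le_of_lt (div_pos hqn hpn))
  set p' : Zvec n := ((c : ℂ)) • p with hp'
  set q' : Zvec n := ((c⁻¹ : ℝ) : ℂ) • q with hq'
  have hup1 : unE p'.ofLp.1 = (c : ℂ) • unE p.ofLp.1 := rfl
  have hup2 : unE p'.ofLp.2 = (c : ℂ) • unE p.ofLp.2 := rfl
  have huq1 : unE q'.ofLp.1 = ((c⁻¹ : ℝ) : ℂ) • unE q.ofLp.1 := rfl
  have huq2 : unE q'.ofLp.2 = ((c⁻¹ : ℝ) : ℂ) • unE q.ofLp.2 := rfl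
  have key := polar hRIP p' q'
    (by
      apply sparse_of_spt_subset (S := Sx) _ hSx
      have : unE (p' + q').ofLp.1 = (c : ℂ) • unE p.ofLp.1 + ((c⁻¹ : ℝ) : ℂ) • unE q.ofLp.1 := rfl
      rw [this]
      exact (spt_add_subset _ _).trans (Finset.union_subset
        ((spt_smul_subset _ _).trans hp1) ((spt_smul_subset _ _).trans hq1)))
    (by
      apply sparse_of_spt_subset (S := Se) _ hSe
      have : unE (p' + q').ofLp.2 = (c : ℂ) • unE p.ofLp.2 + ((c⁻¹ : ℝ) : ℂ) • unE q.ofLp.2 := rfl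
      rw [this]
      exact (spt_add_subset _ _).trans (Finset.union_subset
        ((spt_smul_subset _ _).trans hp2) ((spt_smul_subset _ _).trans hq2)))
    (by
      apply sparse_of_spt_subset (S := Sx) _ hSx
      have : unE (p' - q').ofLp.1 = (c : ℂ) • unE p.ofLp.1 - ((c⁻¹ : ℝ) : ℂ) • unE q.ofLp.1 := rfl
      rw [this]
      exact (spt_sub_subset _ _).trans (Finset.union_subset
        ((spt_smul_subset _ _).trans hp1) ((spt_smul_subset _ _).trans hq1)))
    (by
      apply sparse_of_spt_subset (S := Se) _ hSe
      have : unE (p' - q').ofLp.2 = (c : ℂ) • unE p.ofLp.2 - ((c⁻¹ : ℝ) : ℂ) • unE q.ofLp.2 := rfl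
      rw [this]
      exact (spt_sub_subset _ _).trans (Finset.union_subset
        ((spt_smul_subset _ _).trans hp2) ((spt_smul_subset _ _).trans hq2)))
  have hcne : (c : ℂ) ≠ 0 := by
    simp only [ne_eq, Complex.ofReal_eq_zero]
    exact ne_of_gt hcpos
  have e1 : (inner ℂ (Mop F p') (Mop F q') : ℂ) = inner ℂ (Mop F p) (Mop F q) := by
    rw [hp', hq', Mop_smul, Mop_smul, inner_smul_left, inner_smul_right, Complex.conj_ofReal,
      Complex.ofReal_inv]
    field_simp
  have e2 : (inner ℂ p' q' : ℂ) = inner ℂ p q := by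
    rw [hp', hq', inner_smul_left, inner_smul_right, Complex.conj_ofReal, Complex.ofReal_inv]
    field_simp
  rw [e1, e2] at key
  have np' : ‖p'‖ ^ 2 = ‖q‖ * ‖p‖ := by
    rw [hp', norm_smul, Complex.norm_real, Real.norm_eq_abs, abs_of_pos hcpos, mul_pow, hcsq]
    field_simp
  have nq' : ‖q'‖ ^ 2 = ‖p‖ * ‖q‖ := by
    rw [hq', norm_smul, Complex.norm_real, Real.norm_eq_abs, abs_of_pos (inv_pos.mpr hcpos),
      mul_pow, inv_pow, hcsq]
    field_simp
  rw [np', nq'] at key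
  nlinarith [key]

lemma mkE_unE {n : ℕ} (v : Evec n) : mkE (unE v) = v := rfl

lemma bestA {m : ℕ} {a z z₀ : Fin m → ℂ} (h : ‖mkE (a - z)‖ ≤ ‖mkE (a - z₀)‖)
    {Γ : Finset (Fin m)} (hz : spt z ⊆ Γ) (hz₀ : spt z₀ ⊆ Γ) :
    ‖mkE (res Γ (a - z))‖ ≤ ‖mkE (res Γ (a - z₀))‖ := by
  have k1 : (a - z) - res Γ (a - z) = a - res Γ a := by
    rw [res_sub, res_eq_self hz]
    funext i
    simp only [Pi.sub_apply]
    ring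
  have k2 : (a - z₀) - res Γ (a - z₀) = a - res Γ a := by
    rw [res_sub, res_eq_self hz₀]
    funext i
    simp only [Pi.sub_apply]
    ring
  have p1 := pythag Γ (a - z)
  have p2 := pythag Γ (a - z₀)
  rw [k1] at p1
  rw [k2] at p2
  nlinarith [norm_nonneg (mkE (res Γ (a - z))), norm_nonneg (mkE (res Γ (a - z₀))),
    norm_nonneg (mkE (a - z)), norm_nonneg (mkE (a - z₀)), h]

lemma betaBound (hRIP : RIPhyp n k t F) (Γx Γe : Finset (Fin n))
    (hx : Γx.card ≤ 3 * k) (he : Γe.card ≤ 3 * t) (b : Fin n → ℂ) :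
    ‖mkZ (res Γx (F.mulVec b)) (res Γe b)‖ ≤ 1.1 * ‖mkE b‖ := by
  set q : Zvec n := mkZ (res Γx (F.mulVec b)) (res Γe b) with hqdef
  have hsq1 : Sparse (3 * k) (unE q.ofLp.1) :=
    sparse_of_spt_subset (spt_res_subset Γx (F.mulVec b)) hx
  have hsq2 : Sparse (3 * t) (unE q.ofLp.2) :=
    sparse_of_spt_subset (spt_res_subset Γe b) he
  have hrip := (ripZ hRIP q hsq1 hsq2).2
  have hnormsq : ‖q‖ ^ 2 = RCLike.re (inner ℂ q (mkZ (F.mulVec b) b) : ℂ) := by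
    rw [← inner_self_eq_norm_sq (𝕜 := ℂ)]
    congr 1
    rw [WithLp.prod_inner_apply, WithLp.prod_inner_apply]
    have c1 : (inner ℂ q.ofLp.1 (mkZ (F.mulVec b) b).ofLp.1 : ℂ) = inner ℂ q.ofLp.1 q.ofLp.1 := by
      show (inner ℂ (mkE (res Γx (F.mulVec b))) (mkE (F.mulVec b)) : ℂ) = _
      rw [inner_res_left]
      rfl
    have c2 : (inner ℂ q.ofLp.2 (mkZ (F.mulVec b) b).ofLp.2 : ℂ) = inner ℂ q.ofLp.2 q.ofLp.2 := by
      show (inner ℂ (mkE (res Γe b)) (mkE b) : ℂ) = _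
      rw [inner_res_left]
      rfl
    rw [c1, c2]
  have hadj : (inner ℂ q (mkZ (F.mulVec b) b) : ℂ) = inner ℂ (Mop F q) (mkE b) := by
    rw [WithLp.prod_inner_apply]
    have hm : Mop F q = mkE (F.conjTranspose.mulVec (unE q.ofLp.1)) + mkE (unE q.ofLp.2) := rfl
    rw [hm, inner_add_left, inner_adj]
    simp only [mkZ_fst, mkZ_snd, mkE_unE]
  have hcs : RCLike.re (inner ℂ (Mop F q) (mkE b) : ℂ) ≤ ‖Mop F q‖ * ‖mkE b‖ :=
    re_inner_le_norm (𝕜 := ℂ) _ _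
  by_cases hq0 : ‖q‖ = 0
  · rw [hq0]
    positivity
  · have hqpos : 0 < ‖q‖ := lt_of_le_of_ne (norm_nonneg q) (Ne.symm hq0)
    nlinarith [hnormsq, hadj ▸ hnormsq, hcs, hrip, norm_nonneg (mkE b)]

lemma key_id (hU : F * F.conjTranspose = 1) (q : Zvec n) (rx re : Fin n → ℂ) :
    (inner ℂ q (mkZ (F.mulVec re) (F.conjTranspose.mulVec rx)) : ℂ)
      = inner ℂ (Mop F q) (Mop F (mkZ rx re)) - inner ℂ q (mkZ rx re) := by
  have hFFt : ∀ v : Fin n → ℂ, F.mulVec (F.conjTranspose.mulVec v) = v := by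
    intro v; rw [Matrix.mulVec_mulVec, hU, Matrix.one_mulVec]
  have hm1 : Mop F q = mkE (F.conjTranspose.mulVec (unE q.ofLp.1)) + mkE (unE q.ofLp.2) := rfl
  have hm2 : Mop F (mkZ rx re) = mkE (F.conjTranspose.mulVec rx) + mkE re := rfl
  rw [hm1, hm2, inner_add_left, inner_add_right, inner_add_right, inner_adj, inner_adj,
    hFFt rx]
  rw [WithLp.prod_inner_apply, WithLp.prod_inner_apply, mkZ_fst, mkZ_snd, mkZ_fst, mkZ_snd,
    mkE_unE]
  simp only [mkE_unE]
  ring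

lemma normZ_le {m : ℕ} {u v u' v' : Fin m → ℂ} (h1 : ‖mkE u‖ ≤ ‖mkE u'‖)
    (h2 : ‖mkE v‖ ≤ ‖mkE v'‖) : ‖mkZ u v‖ ≤ ‖mkZ u' v'‖ := by
  rw [WithLp.prod_norm_eq_of_L2, WithLp.prod_norm_eq_of_L2]
  apply Real.sqrt_le_sqrt
  show ‖mkE u‖ ^ 2 + ‖mkE v‖ ^ 2 ≤ ‖mkE u'‖ ^ 2 + ‖mkE v'‖ ^ 2
  nlinarith [norm_nonneg (mkE u), norm_nonneg (mkE v), norm_nonneg (mkE u'),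
    norm_nonneg (mkE v')]

set_option maxHeartbeats 2000000 in
/-- Model-based IHT convergence (Theorem 2): under the `((3k,3t),0.1)`-RIP of `[F⁻¹ I]`,
the IHT iterates converge geometrically to `(x̂, e)` up to `4‖β‖`. -/
theorem iht_convergence
    (n k t : ℕ) (hn : 0 < n) (hk : 0 < k) (ht : 0 < t)
    (F : Matrix (Fin n) (Fin n) ℂ)
    (hFunit : F * F.conjTranspose = 1 ∧ F.conjTranspose * F = 1)
    (hRIP : ∀ (xh' e' : Fin n → ℂ), Sparse (3 * k) xh' → Sparse (3 * t) e' →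
      0.9 * Real.sqrt (l2norm xh' ^ 2 + l2norm e' ^ 2) ≤
          l2norm (F.conjTranspose.mulVec xh' + e') ∧
        l2norm (F.conjTranspose.mulVec xh' + e') ≤
          1.1 * Real.sqrt (l2norm xh' ^ 2 + l2norm e' ^ 2))
    (xh : Fin n → ℂ) (hxh : Sparse k xh)
    (e : Fin n → ℂ) (he : Sparse t e)
    (β : Fin n → ℂ)
    (y : Fin n → ℂ) (hy : y = F.conjTranspose.mulVec xh + e + β)
    (xhSeq ehSeq : ℕ → Fin n → ℂ) (hIHT : IHTSeq y F k t xhSeq ehSeq) :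
    ∀ T : ℕ, 1 ≤ T →
      Real.sqrt (l2norm (xhSeq (T + 1) - xh) ^ 2 + l2norm (ehSeq (T + 1) - e) ^ 2) ≤
        (2 : ℝ) ^ (-(T : ℤ)) * Real.sqrt (l2norm xh ^ 2 + l2norm e ^ 2) +
          4 * l2norm β := by
  obtain ⟨hx1, he1, hstep⟩ := hIHT
  have hRIP' : RIPhyp n k t F := hRIP
  have hFFt : ∀ v : Fin n → ℂ, F.mulVec (F.conjTranspose.mulVec v) = v := by
    intro v; rw [Matrix.mulVec_mulVec, hFunit.1, Matrix.one_mulVec]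
  -- sparsity of iterates
  have hsp : ∀ i, 1 ≤ i → Sparse k (xhSeq i) ∧ Sparse t (ehSeq i) := by
    intro i hi
    induction i, hi using Nat.le_induction with
    | base =>
      rw [hx1, he1]
      exact ⟨by simp [Sparse], by simp [Sparse]⟩
    | succ m hm ih =>
      exact ⟨((hstep m hm).1).1, ((hstep m hm).2).1⟩
  -- one-step contraction
  have hstepB : ∀ i, 1 ≤ i →
      ‖mkZ (xh - xhSeq (i+1)) (e - ehSeq (i+1))‖ ≤
        0.42 * ‖mkZ (xh - xhSeq i) (e - ehSeq i)‖ + 2.2 * ‖mkE β‖ := by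
    intro i hi
    set xi := xhSeq i with hxidef
    set ei := ehSeq i with heidef
    set xi1 := xhSeq (i+1) with hxi1def
    set ei1 := ehSeq (i+1) with hei1def
    set ax := F.mulVec (y - ei) with haxdef
    set ae := y - F.conjTranspose.mulVec xi with haedef
    obtain ⟨bx, be⟩ := hstep i hi
    -- identities
    have iax : ax - xh = F.mulVec (e - ei) + F.mulVec β := by
      rw [haxdef, hy]
      funext j
      simp only [Pi.sub_apply, Pi.add_apply]
      rw [show (F.conjTranspose.mulVec xh + e + β - ei) =
        (F.conjTranspose.mulVec xh) + ((e - ei) + β) by funext l; simp; ring]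
      rw [Matrix.mulVec_add, Matrix.mulVec_add, hFFt]
      simp only [Pi.add_apply]
      ring
    have iae : ae - e = F.conjTranspose.mulVec (xh - xi) + β := by
      rw [haedef, hy, Matrix.mulVec_sub]
      funext j
      simp only [Pi.sub_apply, Pi.add_apply]
      ring
    -- support sets
    set Γx := spt xh ∪ spt xi1 with hΓxdef
    set Γe := spt e ∪ spt ei1 with hΓedef
    set Sx := Γx ∪ spt xi with hSxdef
    set Se := Γe ∪ spt ei with hSedef
    have hkx : (spt xh).card ≤ k := hxh
    have hte : (spt e).card ≤ t := he
    have hkxi : (spt xi).card ≤ k := (hsp i hi).1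
    have htei : (spt ei).card ≤ t := (hsp i hi).2
    have hkxi1 : (spt xi1).card ≤ k := (hsp (i+1) (by omega)).1
    have htei1 : (spt ei1).card ≤ t := (hsp (i+1) (by omega)).2
    have hcu_x : Γx.card ≤ (spt xh).card + (spt xi1).card := Finset.card_union_le _ _
    have hcu_e : Γe.card ≤ (spt e).card + (spt ei1).card := Finset.card_union_le _ _
    have hcu_sx : Sx.card ≤ Γx.card + (spt xi).card := Finset.card_union_le _ _
    have hcu_se : Se.card ≤ Γe.card + (spt ei).card := Finset.card_union_le _ _
    have hΓx3 : Γx.card ≤ 3 * k := by omega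
    have hΓe3 : Γe.card ≤ 3 * t := by omega
    have hSx3 : Sx.card ≤ 3 * k := by omega
    have hSe3 : Se.card ≤ 3 * t := by omega
    -- the vectors
    set r : Zvec n := mkZ (xh - xi) (e - ei) with hrdef
    set q : Zvec n := mkZ (res Sx (F.mulVec (e - ei))) (res Se (F.conjTranspose.mulVec (xh - xi)))
      with hqdef
    -- bound ‖q‖ ≤ 0.21 ‖r‖
    have hq_r : ‖q‖ ≤ 0.21 * ‖r‖ := by
      have hid := key_id (F := F) hFunit.1 q (xh - xi) (e - ei)
      have hself : ‖q‖ ^ 2 =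
          RCLike.re (inner ℂ q (mkZ (F.mulVec (e - ei)) (F.conjTranspose.mulVec (xh - xi))) : ℂ) := by
        rw [← inner_self_eq_norm_sq (𝕜 := ℂ)]
        congr 1
        rw [WithLp.prod_inner_apply, WithLp.prod_inner_apply]
        have c1 : (inner ℂ q.ofLp.1 (mkZ (F.mulVec (e - ei)) (F.conjTranspose.mulVec (xh - xi))).ofLp.1 : ℂ)
            = inner ℂ q.ofLp.1 q.ofLp.1 := by
          show (inner ℂ (mkE (res Sx (F.mulVec (e - ei)))) (mkE (F.mulVec (e - ei))) : ℂ) = _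
          rw [inner_res_left]
          rfl
        have c2 : (inner ℂ q.ofLp.2 (mkZ (F.mulVec (e - ei)) (F.conjTranspose.mulVec (xh - xi))).ofLp.2 : ℂ)
            = inner ℂ q.ofLp.2 q.ofLp.2 := by
          show (inner ℂ (mkE (res Se (F.conjTranspose.mulVec (xh - xi))))
            (mkE (F.conjTranspose.mulVec (xh - xi))) : ℂ) = _
          rw [inner_res_left]
          rfl
        rw [c1, c2]
      have hps := polar_scaled hRIP' Sx Se hSx3 hSe3 q r
        (spt_res_subset _ _)
        (by
          show spt (xh - xi) ⊆ Sx
          refine (spt_sub_subset _ _).trans ?_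
          rw [hSxdef, hΓxdef]
          intro j hj
          simp only [Finset.mem_union] at hj ⊢
          tauto)
        (spt_res_subset _ _)
        (by
          show spt (e - ei) ⊆ Se
          refine (spt_sub_subset _ _).trans ?_
          rw [hSedef, hΓedef]
          intro j hj
          simp only [Finset.mem_union] at hj ⊢
          tauto)
      rw [hid, map_sub] at hself
      by_cases hq0 : ‖q‖ = 0
      · rw [hq0]
        positivity
      · have hqpos : 0 < ‖q‖ := lt_of_le_of_ne (norm_nonneg q) (Ne.symm hq0)
        nlinarith [hself, hps]
    -- best approximation comparisons
    have hbx : ‖mkE (ax - xi1)‖ ≤ ‖mkE (ax - xh)‖ := by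
      have := bx.2 xh hxh
      rw [l2norm_eq_norm, l2norm_eq_norm] at this
      exact this
    have hbe : ‖mkE (ae - ei1)‖ ≤ ‖mkE (ae - e)‖ := by
      have := be.2 e he
      rw [l2norm_eq_norm, l2norm_eq_norm] at this
      exact this
    have hAx : ‖mkE (res Γx (ax - xi1))‖ ≤ ‖mkE (res Γx (ax - xh))‖ :=
      bestA hbx (Finset.subset_union_right) (Finset.subset_union_left)
    have hAe : ‖mkE (res Γe (ae - ei1))‖ ≤ ‖mkE (res Γe (ae - e))‖ :=
      bestA hbe (Finset.subset_union_right) (Finset.subset_union_left)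
    -- decomposition of r'
    have d1 : xh - xi1 = res Γx (ax - xi1) - res Γx (ax - xh) := by
      rw [← res_sub]
      have h1 : (ax - xi1) - (ax - xh) = xh - xi1 := by
        funext j; simp only [Pi.sub_apply]; ring
      rw [h1, res_eq_self ((spt_sub_subset _ _).trans (by rw [hΓxdef]))]
    have d2 : e - ei1 = res Γe (ae - ei1) - res Γe (ae - e) := by
      rw [← res_sub]
      have h1 : (ae - ei1) - (ae - e) = e - ei1 := by
        funext j; simp only [Pi.sub_apply]; ring
      rw [h1, res_eq_self ((spt_sub_subset _ _).trans (by rw [hΓedef]))]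
    have hr'PQ : mkZ (xh - xi1) (e - ei1) =
        mkZ (res Γx (ax - xi1)) (res Γe (ae - ei1)) -
          mkZ (res Γx (ax - xh)) (res Γe (ae - e)) := by
      rw [d1, d2]
      rfl
    -- Q decomposition
    have hQ : mkZ (res Γx (ax - xh)) (res Γe (ae - e)) =
        mkZ (res Γx (F.mulVec (e - ei))) (res Γe (F.conjTranspose.mulVec (xh - xi))) +
          mkZ (res Γx (F.mulVec β)) (res Γe β) := by
      rw [iax, iae, res_add, res_add]
      rfl
    have hq' : ‖mkZ (res Γx (F.mulVec (e - ei))) (res Γe (F.conjTranspose.mulVec (xh - xi)))‖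
        ≤ ‖q‖ :=
      normZ_le (norm_res_mono (Finset.subset_union_left) _)
        (norm_res_mono (Finset.subset_union_left) _)
    have hqb : ‖mkZ (res Γx (F.mulVec β)) (res Γe β)‖ ≤ 1.1 * ‖mkE β‖ :=
      betaBound hRIP' Γx Γe hΓx3 hΓe3 β
    have hQle : ‖mkZ (res Γx (ax - xh)) (res Γe (ae - e))‖ ≤ 0.21 * ‖r‖ + 1.1 * ‖mkE β‖ := by
      rw [hQ]
      refine le_trans (norm_add_le _ _) ?_
      have := le_trans hq' hq_r
      linarith
    have hPle : ‖mkZ (res Γx (ax - xi1)) (res Γe (ae - ei1))‖ ≤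
        ‖mkZ (res Γx (ax - xh)) (res Γe (ae - e))‖ := normZ_le hAx hAe
    calc ‖mkZ (xh - xi1) (e - ei1)‖
        = ‖mkZ (res Γx (ax - xi1)) (res Γe (ae - ei1)) -
            mkZ (res Γx (ax - xh)) (res Γe (ae - e))‖ := by rw [hr'PQ]
      _ ≤ ‖mkZ (res Γx (ax - xi1)) (res Γe (ae - ei1))‖ +
            ‖mkZ (res Γx (ax - xh)) (res Γe (ae - e))‖ := norm_sub_le _ _
      _ ≤ 0.42 * ‖r‖ + 2.2 * ‖mkE β‖ := by
          have := le_trans hPle hQle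
          linarith
  -- geometric decay by induction
  have hind : ∀ i, 1 ≤ i → ‖mkZ (xh - xhSeq i) (e - ehSeq i)‖ ≤
      (1/2 : ℝ) ^ (i - 1) * ‖mkZ xh e‖ + 3.8 * ‖mkE β‖ := by
    intro i hi
    induction i, hi using Nat.le_induction with
    | base =>
      have h1 : xh - xhSeq 1 = xh := by rw [hx1]; funext j; simp
      have h2 : e - ehSeq 1 = e := by rw [he1]; funext j; simp
      rw [h1, h2]
      simp only [Nat.sub_self, pow_zero, one_mul]
      nlinarith [norm_nonneg (mkE β)]
    | succ m hm ih =>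
      have hb := hstepB m hm
      have hmm : m - 1 + 1 = m := Nat.sub_add_cancel hm
      have hpow : (1/2 : ℝ) ^ (m + 1 - 1) = (1/2 : ℝ) ^ (m - 1) * (1/2) := by
        rw [← pow_succ]
        congr 1
        omega
      have hA : (0:ℝ) ≤ (1/2 : ℝ) ^ (m - 1) := by positivity
      rw [hpow]
      nlinarith [norm_nonneg (mkZ xh e), norm_nonneg (mkE β),
        norm_nonneg (mkZ (xh - xhSeq m) (e - ehSeq m))]
  -- conclusion
  intro T hT
  have hfin := hind (T + 1) (by omega)
  have hLHS : Real.sqrt (l2norm (xhSeq (T + 1) - xh) ^ 2 + l2norm (ehSeq (T + 1) - e) ^ 2)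
      = ‖mkZ (xh - xhSeq (T+1)) (e - ehSeq (T+1))‖ := by
    rw [← norm_mkZ]
    have h1 : xhSeq (T+1) - xh = -(xh - xhSeq (T+1)) := by funext j; simp
    have h2 : ehSeq (T+1) - e = -(e - ehSeq (T+1)) := by funext j; simp
    rw [h1, h2]
    have : mkZ (-(xh - xhSeq (T+1))) (-(e - ehSeq (T+1)))
        = -(mkZ (xh - xhSeq (T+1)) (e - ehSeq (T+1))) := rfl
    rw [this, norm_neg]
  have hpow : (2 : ℝ) ^ (-(T : ℤ)) = (1/2 : ℝ) ^ (T + 1 - 1) := by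
    rw [Nat.add_sub_cancel, zpow_neg, zpow_natCast, ← inv_pow]
    norm_num
  rw [hLHS, hpow, ← norm_mkZ, l2norm_eq_norm]
  nlinarith [hfin, norm_nonneg (mkE β)]
end

section
/- Let n, k, t be positive integers, let α ≥ 0 with 3α·√(k·t) ≤ 0.19, and let F ∈ ℂ^{n×n} be a unitary matrix all of whose entries satisfy |F_{ij}| ≤ α. Let x̂ ∈ ℂ^n, let x̂_h be a best k-sparse approximation of x̂ and x̂_t = x̂ − x̂_h, let e ∈ ℂ^n be t-sparse, and let y = F^{-1}x̂ + e. Let (x̂^{[i]}, e^{[i]})_{i≥1} be an IHT sequence for (y, F, k, t). Then for every positive integer T, √(‖x̂^{[T+1]} − x̂_h‖₂² + ‖e^{[T+1]} − e‖₂²) ≤ 2^{-T}·√(‖x̂_h‖₂² + ‖e‖₂²) + 4‖x̂_t‖₂. -/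
namespace IHTAux

open Finset

variable {n : ℕ}

local notation "⟪" x ", " y "⟫" => @inner ℂ _ _ x y

noncomputable def toE (x : Fin n → ℂ) : EuclideanSpace ℂ (Fin n) := WithLp.toLp 2 x

lemma toE_sub (x y : Fin n → ℂ) : toE (x - y) = toE x - toE y := rfl

lemma l2norm_eq (x : Fin n → ℂ) : l2norm x = ‖toE x‖ := by
  rw [EuclideanSpace.norm_eq]
  simp [l2norm, toE]

lemma inner_toE (x y : Fin n → ℂ) :
    ⟪toE x, toE y⟫ = ∑ i, (starRingEnd ℂ) (x i) * y i := by
  simp [toE, PiLp.inner_apply, RCLike.inner_apply, mul_comm]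

lemma norm_toE_sq (x : Fin n → ℂ) : ‖toE x‖ ^ 2 = ∑ i, ‖x i‖ ^ 2 := by
  rw [← l2norm_eq, l2norm]
  exact Real.sq_sqrt (by positivity)

lemma sqle {a b : ℝ} (hb : 0 ≤ b) (h : a ^ 2 ≤ b ^ 2) (ha : 0 ≤ a) : a ≤ b := by
  nlinarith

lemma cancel_le {a D : ℝ} (ha : 0 ≤ a) (hD : 0 ≤ D) (h : a ^ 2 ≤ a * D) : a ≤ D := by
  rcases eq_or_lt_of_le ha with h0 | h0
  · linarith
  · nlinarith

lemma best_key {k : ℕ} {u w s : Fin n → ℂ} (hw : BestSparseApprox k u w) (hs : Sparse k s) :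
    ‖toE w - toE s‖ ^ 2 ≤ 2 * RCLike.re ⟪toE w - toE s, toE u - toE s⟫ := by
  have h := hw.2 s hs
  rw [l2norm_eq, l2norm_eq, toE_sub, toE_sub] at h
  have hsq : ‖toE u - toE w‖ ^ 2 ≤ ‖toE u - toE s‖ ^ 2 := by
    apply pow_le_pow_left₀ (norm_nonneg _) h
  have hexp := @norm_sub_sq ℂ _ _ _ _ (toE u - toE s) (toE w - toE s)
  have heq : (toE u - toE s) - (toE w - toE s) = toE u - toE w := by abel
  rw [heq] at hexp
  have hsymm := inner_re_symm (𝕜 := ℂ) (toE u - toE s) (toE w - toE s)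
  nlinarith [sq_nonneg (‖toE u - toE s‖)]

/-- ℓ1 on support bounded by sqrt(card) times ℓ2. -/
lemma l1_le_sqrt_card (x : Fin n → ℂ) (K : ℕ) (hx : Sparse K x) :
    ∑ i ∈ univ.filter (fun i => x i ≠ 0), ‖x i‖ ≤ Real.sqrt K * ‖toE x‖ := by
  set s := univ.filter (fun i => x i ≠ 0)
  have h1 : (∑ i ∈ s, ‖x i‖) ^ 2 ≤ (K : ℝ) * ‖toE x‖ ^ 2 := by
    calc (∑ i ∈ s, ‖x i‖) ^ 2 ≤ (s.card : ℝ) * ∑ i ∈ s, ‖x i‖ ^ 2 :=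
          sq_sum_le_card_mul_sum_sq
    _ ≤ (K : ℝ) * ∑ i, ‖x i‖ ^ 2 := by
        apply mul_le_mul (by exact_mod_cast hx)
          (Finset.sum_le_sum_of_subset_of_nonneg (Finset.subset_univ s)
            (fun i _ _ => by positivity)) (by positivity) (by positivity)
    _ = (K : ℝ) * ‖toE x‖ ^ 2 := by rw [norm_toE_sq]
  refine sqle (by positivity) ?_ (by positivity)
  rw [mul_pow, Real.sq_sqrt (by positivity)]
  exact h1

lemma coherence {α : ℝ} (hα : 0 ≤ α) (F : Matrix (Fin n) (Fin n) ℂ)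
    (hF : ∀ i j, ‖F i j‖ ≤ α) {K T : ℕ} {u v : Fin n → ℂ}
    (hu : Sparse K u) (hv : Sparse T v) :
    ‖⟪toE u, toE (F.mulVec v)⟫‖ ≤
      α * (Real.sqrt K * Real.sqrt T) * (‖toE u‖ * ‖toE v‖) := by
  set s := univ.filter (fun i => u i ≠ 0) with hs
  set sv := univ.filter (fun j => v j ≠ 0) with hsv
  rw [inner_toE]
  have hrestrict : ∑ i, (starRingEnd ℂ) (u i) * F.mulVec v i
      = ∑ i ∈ s, (starRingEnd ℂ) (u i) * F.mulVec v i := by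
    symm
    apply Finset.sum_subset (Finset.subset_univ s)
    intro i _ hi
    have : u i = 0 := by simpa [hs] using hi
    simp [this]
  rw [hrestrict]
  calc ‖∑ i ∈ s, (starRingEnd ℂ) (u i) * F.mulVec v i‖
      ≤ ∑ i ∈ s, ‖(starRingEnd ℂ) (u i) * F.mulVec v i‖ :=
        norm_sum_le _ _
    _ ≤ ∑ i ∈ s, ‖u i‖ * (α * ∑ j ∈ sv, ‖v j‖) := by
        apply Finset.sum_le_sum
        intro i _
        rw [norm_mul, Complex.norm_conj]
        apply mul_le_mul_of_nonneg_left _ (norm_nonneg _)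
        have hrow : F.mulVec v i = ∑ j ∈ sv, F i j * v j := by
          symm
          apply Finset.sum_subset (Finset.subset_univ sv)
          intro j _ hj
          have : v j = 0 := by simpa [hsv] using hj
          simp [this]
        rw [hrow]
        calc ‖∑ j ∈ sv, F i j * v j‖
            ≤ ∑ j ∈ sv, ‖F i j * v j‖ := norm_sum_le _ _
          _ ≤ ∑ j ∈ sv, α * ‖v j‖ := by
              apply Finset.sum_le_sum
              intro j _
              rw [norm_mul]
              exact mul_le_mul_of_nonneg_right (hF i j) (norm_nonneg _)
          _ = α * ∑ j ∈ sv, ‖v j‖ := by rw [Finset.mul_sum]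
    _ = α * ((∑ i ∈ s, ‖u i‖) * (∑ j ∈ sv, ‖v j‖)) := by
        rw [← Finset.sum_mul]; ring
    _ ≤ α * ((Real.sqrt K * ‖toE u‖) * (Real.sqrt T * ‖toE v‖)) := by
        apply mul_le_mul_of_nonneg_left _ hα
        apply mul_le_mul (l1_le_sqrt_card u K hu) (l1_le_sqrt_card v T hv)
          (Finset.sum_nonneg (fun j _ => by positivity)) (by positivity)
    _ = α * (Real.sqrt K * Real.sqrt T) * (‖toE u‖ * ‖toE v‖) := by ring

lemma inner_adjoint (F : Matrix (Fin n) (Fin n) ℂ) (a b : Fin n → ℂ) :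
    ⟪toE a, toE (F.conjTranspose.mulVec b)⟫ = ⟪toE (F.mulVec a), toE b⟫ := by
  rw [inner_toE, inner_toE]
  simp only [Matrix.mulVec, dotProduct, Matrix.conjTranspose_apply, map_sum, map_mul,
    Finset.mul_sum, Finset.sum_mul]
  rw [Finset.sum_comm]
  apply Finset.sum_congr rfl
  intro i _
  apply Finset.sum_congr rfl
  intro j _
  simp only [starRingEnd_apply]; ring

lemma norm_mulVec (F : Matrix (Fin n) (Fin n) ℂ) (h : F.conjTranspose * F = 1)
    (v : Fin n → ℂ) : ‖toE (F.mulVec v)‖ = ‖toE v‖ := by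
  have key : ⟪toE (F.mulVec v), toE (F.mulVec v)⟫ = ⟪toE v, toE v⟫ := by
    rw [← inner_adjoint F v (F.mulVec v), Matrix.mulVec_mulVec, h, Matrix.one_mulVec]
  rw [norm_eq_sqrt_re_inner (𝕜 := ℂ) (toE (F.mulVec v)), norm_eq_sqrt_re_inner (𝕜 := ℂ) (toE v), key]

lemma sparse_zero {k : ℕ} : Sparse k (0 : Fin n → ℂ) := by simp [Sparse]

lemma sparse_sub {k₁ k₂ : ℕ} {a b : Fin n → ℂ} (ha : Sparse k₁ a) (hb : Sparse k₂ b) :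
    Sparse (k₁ + k₂) (a - b) := by
  unfold Sparse at *
  calc (univ.filter (fun i => (a - b) i ≠ 0)).card
      ≤ ((univ.filter (fun i => a i ≠ 0)) ∪ (univ.filter (fun i => b i ≠ 0))).card := by
        apply Finset.card_le_card
        intro i hi
        simp only [Finset.mem_filter, Finset.mem_union, Finset.mem_univ, true_and] at *
        by_contra hc
        push_neg at hc
        simp [Pi.sub_apply, hc.1, hc.2] at hi
    _ ≤ _ := le_trans (Finset.card_union_le _ _) (add_le_add ha hb)

lemma sqrt2_le : Real.sqrt 2 ≤ 1.41422 := by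
  nlinarith [Real.sq_sqrt (by norm_num : (0:ℝ) ≤ 2), Real.sqrt_nonneg 2]

end IHTAux

open IHTAux

local notation "⟪" x ", " y "⟫" => @inner ℂ _ _ x y

set_option maxHeartbeats 2000000

/-- Weak L2-L2 guarantee (equation (3) in the proof of the Main Theorem). -/
theorem iht_weak_l2_guarantee
    (n k t : ℕ) (hn : 0 < n) (hk : 0 < k) (ht : 0 < t)
    (α : ℝ) (hα : 0 ≤ α) (hαkt : 3 * α * Real.sqrt (k * t) ≤ 0.19)
    (F : Matrix (Fin n) (Fin n) ℂ)
    (hFunit : F * F.conjTranspose = 1 ∧ F.conjTranspose * F = 1)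
    (hF : ∀ i j, ‖F i j‖ ≤ α)
    (xhat : Fin n → ℂ)
    (xhatH : Fin n → ℂ) (hH : BestSparseApprox k xhat xhatH)
    (xhatT : Fin n → ℂ) (hT : xhatT = xhat - xhatH)
    (e : Fin n → ℂ) (he : Sparse t e)
    (y : Fin n → ℂ) (hy : y = F.conjTranspose.mulVec xhat + e)
    (xhSeq ehSeq : ℕ → Fin n → ℂ) (hIHT : IHTSeq y F k t xhSeq ehSeq) :
    ∀ T : ℕ, 1 ≤ T →
      Real.sqrt (l2norm (xhSeq (T + 1) - xhatH) ^ 2 + l2norm (ehSeq (T + 1) - e) ^ 2) ≤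
        (2 : ℝ) ^ (-(T : ℤ)) * Real.sqrt (l2norm xhatH ^ 2 + l2norm e ^ 2) +
          4 * l2norm xhatT := by
  obtain ⟨hFFt, hFtF⟩ := hFunit
  obtain ⟨hx1, he1, hstep⟩ := hIHT
  obtain ⟨μ, hμdef⟩ : ∃ μ : ℝ, μ = α * Real.sqrt ((k : ℝ) * (t : ℝ)) := ⟨_, rfl⟩
  have hμ0 : 0 ≤ μ := by rw [hμdef]; positivity
  have hμ3 : 3 * μ ≤ 0.19 := by
    rw [hμdef]; push_cast at hαkt ⊢; nlinarith [hαkt]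
  obtain ⟨τ, hτdef⟩ : ∃ τ : ℝ, τ = ‖toE xhatT‖ := ⟨_, rfl⟩
  have hτ0 : 0 ≤ τ := hτdef ▸ norm_nonneg _
  obtain ⟨A, hAdef⟩ : ∃ A : ℕ → ℝ, A = fun i => ‖toE (xhSeq i - xhatH)‖ := ⟨_, rfl⟩
  obtain ⟨B, hBdef⟩ : ∃ B : ℕ → ℝ, B = fun i => ‖toE (ehSeq i - e)‖ := ⟨_, rfl⟩
  have hA0 : ∀ i, 0 ≤ A i := fun i => by simp only [hAdef]; exact norm_nonneg _
  have hB0 : ∀ i, 0 ≤ B i := fun i => by simp only [hBdef]; exact norm_nonneg _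
  -- sparsity of iterates
  have hxsp : ∀ i, 1 ≤ i → Sparse k (xhSeq i) := by
    intro i hi
    match i, hi with
    | 1, _ => rw [hx1]; exact sparse_zero
    | (m+2), _ => exact (hstep (m+1) (by omega)).1.1
  have hesp : ∀ i, 1 ≤ i → Sparse t (ehSeq i) := by
    intro i hi
    match i, hi with
    | 1, _ => rw [he1]; exact sparse_zero
    | (m+2), _ => exact (hstep (m+1) (by omega)).2.1
  -- √((k+k)(t+t)) = 2√(kt)
  have hcoh2 : α * (Real.sqrt ((k+k : ℕ) : ℝ) * Real.sqrt ((t+t : ℕ) : ℝ)) = 2 * μ := by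
    have e1 : ((k+k : ℕ) : ℝ) = 2 * (k : ℝ) := by push_cast; ring
    have e2 : ((t+t : ℕ) : ℝ) = 2 * (t : ℝ) := by push_cast; ring
    have s2 : Real.sqrt 2 * Real.sqrt 2 = 2 := Real.mul_self_sqrt (by norm_num)
    rw [hμdef, e1, e2, Real.sqrt_mul (by norm_num), Real.sqrt_mul (by norm_num),
      Real.sqrt_mul (Nat.cast_nonneg k)]
    linear_combination (α * Real.sqrt (k : ℝ) * Real.sqrt (t : ℝ)) * s2
  -- the x-step contraction
  have hstepA : ∀ i, 1 ≤ i → A (i+1) ≤ 4 * μ * B i + 2 * τ := by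
    intro i hi
    simp only [hAdef, hBdef, hτdef]
    have hbk := best_key (hstep i hi).1 hH.1
    have hw : F.mulVec (y - ehSeq i) - xhatH = xhatT - F.mulVec (ehSeq i - e) := by
      rw [hy, hT]
      simp only [Matrix.mulVec_sub, Matrix.mulVec_add, Matrix.mulVec_mulVec, hFFt,
        Matrix.one_mulVec]
      abel
    have hrw : toE (F.mulVec (y - ehSeq i)) - toE xhatH
        = toE xhatT - toE (F.mulVec (ehSeq i - e)) := by
      rw [← toE_sub, ← toE_sub, hw]
    have hrw2 : toE (xhSeq (i+1)) - toE xhatH = toE (xhSeq (i+1) - xhatH) :=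
      (toE_sub _ _).symm
    rw [hrw2, hrw, inner_sub_right, map_sub] at hbk
    have h1 : RCLike.re ⟪toE (xhSeq (i+1) - xhatH), toE xhatT⟫
        ≤ ‖toE (xhSeq (i+1) - xhatH)‖ * ‖toE xhatT‖ := re_inner_le_norm _ _
    have h2 : -(RCLike.re ⟪toE (xhSeq (i+1) - xhatH), toE (F.mulVec (ehSeq i - e))⟫) ≤
        2 * μ * (‖toE (xhSeq (i+1) - xhatH)‖ * ‖toE (ehSeq i - e)‖) := by
      have habs := coherence hα F hF
        (sparse_sub (hxsp (i+1) (by omega)) hH.1)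
        (sparse_sub (hesp i hi) he)
      rw [hcoh2] at habs
      calc -(RCLike.re ⟪toE (xhSeq (i+1) - xhatH), toE (F.mulVec (ehSeq i - e))⟫)
          ≤ |RCLike.re ⟪toE (xhSeq (i+1) - xhatH), toE (F.mulVec (ehSeq i - e))⟫| :=
            neg_le_abs _
        _ ≤ ‖⟪toE (xhSeq (i+1) - xhatH), toE (F.mulVec (ehSeq i - e))⟫‖ := by
            simpa using Complex.abs_re_le_norm
              ⟪toE (xhSeq (i+1) - xhatH), toE (F.mulVec (ehSeq i - e))⟫
        _ ≤ 2 * μ * (‖toE (xhSeq (i+1) - xhatH)‖ * ‖toE (ehSeq i - e)‖) := habs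
    have hD : (0:ℝ) ≤ 4 * μ * ‖toE (ehSeq i - e)‖ + 2 * ‖toE xhatT‖ := by
      have := mul_nonneg hμ0 (norm_nonneg (toE (ehSeq i - e)))
      have := norm_nonneg (toE xhatT); linarith
    apply cancel_le (norm_nonneg _) hD
    nlinarith [hbk, h1, h2]
  -- the e-step contraction
  have hstepB : ∀ i, 1 ≤ i → B (i+1) ≤ 4 * μ * A i + 2 * τ := by
    intro i hi
    simp only [hAdef, hBdef, hτdef]
    have hbk := best_key (hstep i hi).2 he
    have hw : (y - F.conjTranspose.mulVec (xhSeq i)) - e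
        = F.conjTranspose.mulVec (xhatT - (xhSeq i - xhatH)) := by
      rw [hy, hT]
      simp only [Matrix.mulVec_sub]
      abel
    have hrw : toE (y - F.conjTranspose.mulVec (xhSeq i)) - toE e
        = toE (F.conjTranspose.mulVec (xhatT - (xhSeq i - xhatH))) := by
      rw [← toE_sub, hw]
    have hrw2 : toE (ehSeq (i+1)) - toE e = toE (ehSeq (i+1) - e) := (toE_sub _ _).symm
    rw [hrw2, hrw, inner_adjoint F (ehSeq (i+1) - e) (xhatT - (xhSeq i - xhatH))] at hbk
    have hrw3 : toE (xhatT - (xhSeq i - xhatH)) = toE xhatT - toE (xhSeq i - xhatH) :=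
      toE_sub _ _
    rw [hrw3, inner_sub_right, map_sub] at hbk
    have hnorm : ‖toE (F.mulVec (ehSeq (i+1) - e))‖ = ‖toE (ehSeq (i+1) - e)‖ :=
      norm_mulVec F hFtF _
    have h1 : RCLike.re ⟪toE (F.mulVec (ehSeq (i+1) - e)), toE xhatT⟫
        ≤ ‖toE (ehSeq (i+1) - e)‖ * ‖toE xhatT‖ := by
      calc RCLike.re ⟪toE (F.mulVec (ehSeq (i+1) - e)), toE xhatT⟫
          ≤ ‖toE (F.mulVec (ehSeq (i+1) - e))‖ * ‖toE xhatT‖ := re_inner_le_norm _ _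
        _ = ‖toE (ehSeq (i+1) - e)‖ * ‖toE xhatT‖ := by rw [hnorm]
    have h2 : -(RCLike.re ⟪toE (F.mulVec (ehSeq (i+1) - e)), toE (xhSeq i - xhatH)⟫) ≤
        2 * μ * (‖toE (xhSeq i - xhatH)‖ * ‖toE (ehSeq (i+1) - e)‖) := by
      have habs := coherence hα F hF
        (sparse_sub (hxsp i hi) hH.1)
        (sparse_sub (hesp (i+1) (by omega)) he)
      rw [hcoh2] at habs
      have hsymm : RCLike.re ⟪toE (F.mulVec (ehSeq (i+1) - e)), toE (xhSeq i - xhatH)⟫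
          = RCLike.re ⟪toE (xhSeq i - xhatH), toE (F.mulVec (ehSeq (i+1) - e))⟫ :=
        inner_re_symm _ _
      rw [hsymm]
      calc -(RCLike.re ⟪toE (xhSeq i - xhatH), toE (F.mulVec (ehSeq (i+1) - e))⟫)
          ≤ |RCLike.re ⟪toE (xhSeq i - xhatH), toE (F.mulVec (ehSeq (i+1) - e))⟫| := neg_le_abs _
        _ ≤ ‖⟪toE (xhSeq i - xhatH), toE (F.mulVec (ehSeq (i+1) - e))⟫‖ := by
            simpa using Complex.abs_re_le_norm
              ⟪toE (xhSeq i - xhatH), toE (F.mulVec (ehSeq (i+1) - e))⟫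
        _ ≤ 2 * μ * (‖toE (xhSeq i - xhatH)‖ * ‖toE (ehSeq (i+1) - e)‖) := habs
    have hD : (0:ℝ) ≤ 4 * μ * ‖toE (xhSeq i - xhatH)‖ + 2 * ‖toE xhatT‖ := by
      have := mul_nonneg hμ0 (norm_nonneg (toE (xhSeq i - xhatH)))
      have := norm_nonneg (toE xhatT); linarith
    apply cancel_le (norm_nonneg _) hD
    nlinarith [hbk, h1, h2]
  -- the combined geometric decay, by induction
  obtain ⟨a1, ha1def⟩ : ∃ a1 : ℝ, a1 = Real.sqrt (A 1 ^ 2 + B 1 ^ 2) := ⟨_, rfl⟩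
  have ha10 : 0 ≤ a1 := ha1def ▸ Real.sqrt_nonneg _
  have hs2 : Real.sqrt 2 ≤ 1.41422 := sqrt2_le
  have hs20 : (0:ℝ) ≤ Real.sqrt 2 := Real.sqrt_nonneg _
  have hs2sq : Real.sqrt 2 ^ 2 = 2 := Real.sq_sqrt (by norm_num)
  have key : ∀ i, 1 ≤ i →
      Real.sqrt (A i ^ 2 + B i ^ 2) ≤ (2:ℝ) ^ (-(i:ℤ) + 1) * a1 + 4 * τ := by
    intro i hi
    induction i, hi using Nat.le_induction with
    | base =>
      have h1 : (-((1:ℕ):ℤ) + 1) = 0 := by norm_num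
      rw [h1, zpow_zero, one_mul]
      have heq : Real.sqrt (A 1 ^ 2 + B 1 ^ 2) = a1 := ha1def.symm
      rw [heq]
      linarith
    | succ i hi ih =>
      have hAi := hstepA i hi
      have hBi := hstepB i hi
      obtain ⟨s, hsdef⟩ : ∃ s : ℝ, s = Real.sqrt (A i ^ 2 + B i ^ 2) := ⟨_, rfl⟩
      rw [← hsdef] at ih
      have hs0 : 0 ≤ s := hsdef ▸ Real.sqrt_nonneg _
      have hssq : s ^ 2 = A i ^ 2 + B i ^ 2 := by
        rw [hsdef]; exact Real.sq_sqrt (add_nonneg (sq_nonneg _) (sq_nonneg _))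
      have hABs : A i + B i ≤ Real.sqrt 2 * s := by
        apply sqle (mul_nonneg hs20 hs0) _ (add_nonneg (hA0 i) (hB0 i))
        rw [mul_pow, hs2sq, hssq]
        nlinarith [sq_nonneg (A i - B i)]
      have hAis : A i ≤ s := by nlinarith [sq_nonneg (B i), hA0 i, hs0, hssq]
      have hBis : B i ≤ s := by nlinarith [sq_nonneg (A i), hB0 i, hs0, hssq]
      have hstep2 : Real.sqrt (A (i+1) ^ 2 + B (i+1) ^ 2)
          ≤ 4 * μ * s + 2 * Real.sqrt 2 * τ := by
        have hb : (0:ℝ) ≤ 4 * μ * s + 2 * Real.sqrt 2 * τ :=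
          add_nonneg (mul_nonneg (by linarith : (0:ℝ) ≤ 4 * μ) hs0)
            (mul_nonneg (by linarith : (0:ℝ) ≤ 2 * Real.sqrt 2) hτ0)
        have hA'sq : A (i+1) ^ 2 ≤ (4 * μ * B i + 2 * τ) ^ 2 :=
          pow_le_pow_left₀ (hA0 _) hAi 2
        have hB'sq : B (i+1) ^ 2 ≤ (4 * μ * A i + 2 * τ) ^ 2 :=
          pow_le_pow_left₀ (hB0 _) hBi 2
        have hmt : 0 ≤ μ * τ := mul_nonneg hμ0 hτ0
        have hcross : (μ * τ) * (A i + B i) ≤ (μ * τ) * (Real.sqrt 2 * s) :=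
          mul_le_mul_of_nonneg_left hABs hmt
        have h16s : 16 * μ^2 * s^2 = 16 * μ^2 * (A i ^ 2 + B i ^ 2) := by rw [hssq]
        have ht2 : 4 * (Real.sqrt 2)^2 * τ^2 = 8 * τ^2 := by rw [hs2sq]; ring
        have hsq : A (i+1) ^ 2 + B (i+1) ^ 2 ≤ (4 * μ * s + 2 * Real.sqrt 2 * τ) ^ 2 := by
          nlinarith [hA'sq, hB'sq, h16s, hcross, ht2]
        calc Real.sqrt (A (i+1) ^ 2 + B (i+1) ^ 2)
            ≤ Real.sqrt ((4 * μ * s + 2 * Real.sqrt 2 * τ) ^ 2) := Real.sqrt_le_sqrt hsq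
          _ = 4 * μ * s + 2 * Real.sqrt 2 * τ := Real.sqrt_sq hb
      have hρ : 4 * μ ≤ 1/2 := by linarith
      have hc : 16 * μ + 2 * Real.sqrt 2 ≤ 4 := by linarith
      have h16 : 16 * μ * τ + 2 * Real.sqrt 2 * τ ≤ 4 * τ := by
        nlinarith [mul_le_mul_of_nonneg_right hc hτ0]
      have hz0 : (0:ℝ) ≤ (2:ℝ) ^ (-(i:ℤ) + 1) := by positivity
      have hza0 : (0:ℝ) ≤ (2:ℝ) ^ (-(i:ℤ) + 1) * a1 := mul_nonneg hz0 ha10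
      have hzeq : (1/2) * ((2:ℝ) ^ (-(i:ℤ) + 1)) = (2:ℝ) ^ (-((i+1:ℕ):ℤ) + 1) := by
        rw [show (-((i+1:ℕ):ℤ) + 1) = (-(i:ℤ) + 1) + (-1) by push_cast; ring,
          zpow_add₀ (by norm_num : (2:ℝ) ≠ 0) (-(i:ℤ) + 1) (-1), zpow_neg_one]
        ring
      have hmono : 4 * μ * s ≤ 4 * μ * ((2:ℝ) ^ (-(i:ℤ) + 1) * a1 + 4 * τ) :=
        mul_le_mul_of_nonneg_left ih (by linarith : (0:ℝ) ≤ 4 * μ)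
      have hhalf : (4 * μ) * ((2:ℝ) ^ (-(i:ℤ) + 1) * a1) ≤
          (1/2) * ((2:ℝ) ^ (-(i:ℤ) + 1) * a1) :=
        mul_le_mul_of_nonneg_right hρ hza0
      calc Real.sqrt (A (i+1) ^ 2 + B (i+1) ^ 2)
          ≤ 4 * μ * s + 2 * Real.sqrt 2 * τ := hstep2
        _ ≤ (1/2) * ((2:ℝ) ^ (-(i:ℤ) + 1) * a1) + 4 * τ := by nlinarith [hmono, hhalf, h16]
        _ = (2:ℝ) ^ (-((i+1:ℕ):ℤ) + 1) * a1 + 4 * τ := by rw [← hzeq]; ring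
  -- initial values
  have hA1 : A 1 = ‖toE xhatH‖ := by
    simp only [hAdef]
    rw [hx1, zero_sub, show toE (-xhatH) = -(toE xhatH) from rfl, norm_neg]
  have hB1 : B 1 = ‖toE e‖ := by
    simp only [hBdef]
    rw [he1, zero_sub, show toE (-e) = -(toE e) from rfl, norm_neg]
  -- conclusion
  intro T hT
  have hk2 := key (T+1) (by omega)
  have hexp : (-(((T+1):ℕ):ℤ) + 1) = -(T:ℤ) := by push_cast; ring
  rw [hexp] at hk2
  have e1 : l2norm (xhSeq (T+1) - xhatH) = A (T+1) := by
    rw [l2norm_eq]; simp only [hAdef]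
  have e2 : l2norm (ehSeq (T+1) - e) = B (T+1) := by
    rw [l2norm_eq]; simp only [hBdef]
  have e3 : Real.sqrt (l2norm xhatH ^ 2 + l2norm e ^ 2) = a1 := by
    rw [ha1def, hA1, hB1, l2norm_eq, l2norm_eq]
  have e4 : l2norm xhatT = τ := by rw [l2norm_eq, hτdef]
  rw [e1, e2, e3, e4]
  exact hk2
end
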